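/- arXiv:0803.1141 — 5 statements merged into one kernel-verified Lean document; each statement's English description precedes it below -/
import Mathlib

section
/- Let F : [a,b] → ℝ be differentiable with F′ monotone on [a,b], and suppose either F′(x) ≥ ε > 0 for all x ∈ [a,b] or F′(x) ≤ −ε < 0 for all x ∈ [a,b]. Then |∫_a^b e^{iF(x)} dx| ≤ 4/ε. -/
open Set MeasureTheory intervalIntegral Complex in

lemma deriv_contOn {a b : ℝ} {F F' : ℝ → ℝ}
    (hderiv : ∀ x ∈ Set.Icc a b, HasDerivAt F (F' x) x)
    (hmono : MonotoneOn F' (Set.Icc a b)) :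
    ContinuousOn F' (Set.Icc a b) := by
  intro x hx
  obtain ⟨hax, hxb⟩ := hx
  have himg : ∀ u v : ℝ, a ≤ u → v ≤ b → OrdConnected (F' '' Icc u v) := by
    intro u v hu hv
    refine Set.OrdConnected.image_hasDerivWithinAt (f := F) (f' := F') ordConnected_Icc ?_
    intro y hy
    exact (hderiv y ⟨hu.trans hy.1, hy.2.trans hv⟩).hasDerivWithinAt
  have hleft : ContinuousWithinAt F' (Icc a x) x := by
    rcases eq_or_lt_of_le hax with h | h
    · subst h
      simp only [Icc_self]
      exact continuousWithinAt_singleton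
    rcases eq_or_lt_of_le (hmono ⟨le_refl a, hax.trans hxb⟩ ⟨hax, hxb⟩ hax) with hc | hc
    · have heq : Set.EqOn F' (fun _ => F' x) (Icc a x) := by
        intro y hy
        have h1 := hmono ⟨le_refl a, hax.trans hxb⟩ ⟨hy.1.trans' le_rfl, hy.2.trans hxb⟩ hy.1
        have h2 := hmono ⟨hy.1.trans' le_rfl, hy.2.trans hxb⟩ ⟨hax, hxb⟩ hy.2
        exact le_antisymm h2 (hc ▸ h1)
      exact continuousWithinAt_const.congr heq (heq ⟨hax, le_refl x⟩)
    · have h1 : ContinuousWithinAt F' (Iic x) x := by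
        apply continuousWithinAt_left_of_monotoneOn_of_closure_image_mem_nhdsWithin
          (s := Icc a x) (hmono.mono (Icc_subset_Icc le_rfl hxb))
        · exact Icc_mem_nhdsLE_of_mem ⟨h, le_refl x⟩
        · exact Filter.mem_of_superset (Icc_mem_nhdsLE_of_mem ⟨hc, le_refl (F' x)⟩)
            (((himg a x le_rfl hxb).out (mem_image_of_mem F' ⟨le_refl a, hax⟩)
              (mem_image_of_mem F' ⟨hax, le_refl x⟩)).trans subset_closure)
      exact h1.mono Icc_subset_Iic_self
  have hright : ContinuousWithinAt F' (Icc x b) x := by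
    rcases eq_or_lt_of_le hxb with h | h
    · subst h
      simp only [Icc_self]
      exact continuousWithinAt_singleton
    rcases eq_or_lt_of_le (hmono ⟨hax, hxb⟩ ⟨hax.trans hxb, le_refl b⟩ hxb) with hc | hc
    · have heq : Set.EqOn F' (fun _ => F' x) (Icc x b) := by
        intro y hy
        have h1 := hmono ⟨hax, hxb⟩ ⟨hax.trans hy.1, hy.2⟩ hy.1
        have h2 := hmono ⟨hax.trans hy.1, hy.2⟩ ⟨hax.trans hxb, le_refl b⟩ hy.2
        exact le_antisymm (hc ▸ h2) h1
      exact continuousWithinAt_const.congr heq (heq ⟨le_refl x, hxb⟩)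
    · have h1 : ContinuousWithinAt F' (Ici x) x := by
        apply continuousWithinAt_right_of_monotoneOn_of_closure_image_mem_nhdsWithin
          (s := Icc x b) (hmono.mono (Icc_subset_Icc hax le_rfl))
        · exact Icc_mem_nhdsGE_of_mem ⟨le_refl x, h⟩
        · exact Filter.mem_of_superset (Icc_mem_nhdsGE_of_mem ⟨le_refl (F' x), hc⟩)
            (((himg x b hax le_rfl).out (mem_image_of_mem F' ⟨le_refl x, hxb⟩)
              (mem_image_of_mem F' ⟨hxb, le_refl b⟩)).trans subset_closure)
      exact h1.mono Icc_subset_Ici_self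
  have : ContinuousWithinAt F' (Icc a x ∪ Icc x b) x := hleft.union hright
  exact this.mono (fun y hy => by
    rcases le_total y x with h | h
    · exact Or.inl ⟨hy.1, h⟩
    · exact Or.inr ⟨h, hy.2⟩)

open Set MeasureTheory intervalIntegral Complex in

private lemma sandwich_ae {u v : ℝ} {s : Set ℝ} (h1 : Ioo u v ⊆ s) (h2 : s ⊆ Icc u v) :
    s =ᵐ[volume] Ioc u v := by
  have hIcc : (Icc u v : Set ℝ) =ᵐ[volume] Ioc u v :=
    (Ioo_ae_eq_Icc (μ := volume) (a := u) (b := v)).symm.trans Ioo_ae_eq_Ioc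
  exact (HasSubset.Subset.eventuallyLE h2 |>.trans hIcc.le).antisymm
    ((Ioo_ae_eq_Ioc (μ := volume) (a := u) (b := v)).symm.le.trans
      (HasSubset.Subset.eventuallyLE h1))

open Set MeasureTheory intervalIntegral Complex in
lemma core (a b ε : ℝ) (hab : a ≤ b) (hε : 0 < ε)
    (F F' : ℝ → ℝ)
    (hderiv : ∀ x ∈ Set.Icc a b, HasDerivAt F (F' x) x)
    (hcont : ContinuousOn F' (Set.Icc a b))
    (hmono : MonotoneOn F' (Set.Icc a b) ∨ AntitoneOn F' (Set.Icc a b))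
    (hsign : ∀ x ∈ Set.Icc a b, ε ≤ F' x) :
    ‖∫ x in a..b, Complex.exp (Complex.I * F x)‖ ≤ 4 / ε := by
  set M : ℝ := ε⁻¹ with hM
  -- projection onto [a,b]
  set p : ℝ → ℝ := fun y => max a (min y b) with hp
  have hpc : Continuous p := continuous_const.max (continuous_id.min continuous_const)
  have hpmem : ∀ y, p y ∈ Icc a b := fun y =>
    ⟨le_max_left _ _, max_le hab (min_le_right _ _)⟩
  have hpid : ∀ y ∈ Icc a b, p y = y := by
    intro y hy
    simp [hp, min_eq_left hy.2, max_eq_right hy.1]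
  have hFpos : ∀ y, 0 < F' (p y) := fun y => hε.trans_le (hsign _ (hpmem y))
  -- the integrand pieces
  set g : ℝ → ℂ := fun y => (F' (p y) : ℂ) * Complex.exp (Complex.I * F (p y)) with hg
  have hFc : ContinuousOn F (Icc a b) := fun x hx =>
    (hderiv x hx).continuousAt.continuousWithinAt
  have hgc : Continuous g := by
    have h1 : Continuous fun y => F' (p y) :=
      hcont.comp_continuous hpc hpmem
    have h2 : Continuous fun y => F (p y) :=
      hFc.comp_continuous hpc hpmem
    exact (continuous_ofReal.comp h1).mul
      ((continuous_const.mul (continuous_ofReal.comp h2)).cexp)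
  obtain ⟨B, hB⟩ := isCompact_Icc.exists_bound_of_continuousOn (s := Set.Icc a b) hcont
  have hnormg : ∀ y, ‖g y‖ ≤ B := by
    intro y
    rw [hg]
    simp only [norm_mul, Complex.norm_real]
    rw [mul_comm Complex.I, norm_exp_ofReal_mul_I, mul_one]
    exact hB _ (hpmem y)
  set φ : ℝ → ℝ := fun y => (F' (p y))⁻¹ with hφ
  have hφc : Continuous φ := (hcont.comp_continuous hpc hpmem).inv₀
    (fun y => (hFpos y).ne')
  have hφpos : ∀ y, 0 < φ y := fun y => inv_pos.2 (hFpos y)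
  have hφle : ∀ y, φ y ≤ M := fun y => inv_anti₀ hε (hsign _ (hpmem y))
  -- superlevel sets of φ within [a,b] are order-connected
  have hODT : ∀ t : ℝ, Set.OrdConnected {x | x ∈ Icc a b ∧ t < φ x} := by
    intro t
    constructor
    rintro x ⟨hx, hφx⟩ y ⟨hy, hφy⟩ z hz
    have hzm : z ∈ Icc a b := ⟨hx.1.trans hz.1, hz.2.trans hy.2⟩
    refine ⟨hzm, ?_⟩
    have hx' : φ x = (F' x)⁻¹ := by rw [hφ]; simp only; rw [hpid x hx]
    have hy' : φ y = (F' y)⁻¹ := by rw [hφ]; simp only; rw [hpid y hy]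
    have hz' : φ z = (F' z)⁻¹ := by rw [hφ]; simp only; rw [hpid z hzm]
    rcases hmono with hm | hm
    · have : F' z ≤ F' y := hm hzm hy hz.2
      have := inv_anti₀ (hε.trans_le (hsign z hzm)) this
      rw [hz']; rw [hy'] at hφy; linarith
    · have : F' z ≤ F' x := hm hx hzm hz.1
      have := inv_anti₀ (hε.trans_le (hsign z hzm)) this
      rw [hz']; rw [hx'] at hφx; linarith
  -- the antiderivative bound
  have hE : ∀ x ∈ Icc a b, HasDerivAt (fun y => -Complex.I * Complex.exp (Complex.I * F y)) (g x) x := by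
    intro x hx
    have h0 := (((hderiv x hx).ofReal_comp.const_mul Complex.I).cexp).const_mul (-Complex.I)
    refine h0.congr_deriv ?_
    rw [hg]; simp only
    rw [hpid x hx]
    have : (-Complex.I) * (Complex.exp (Complex.I * F x) * (Complex.I * (F' x : ℂ)))
        = (-(Complex.I*Complex.I)) * ((F' x : ℂ) * Complex.exp (Complex.I * F x)) := by ring
    rw [this, Complex.I_mul_I]
    ring
  have hkey : ∀ u v : ℝ, u ∈ Icc a b → v ∈ Icc a b → u ≤ v →
      ‖∫ x in Ioc u v, g x‖ ≤ 2 := by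
    intro u v hu hv huv
    rw [← intervalIntegral.integral_of_le huv]
    rw [intervalIntegral.integral_eq_sub_of_hasDerivAt
      (fun x hx => by
        rw [uIcc_of_le huv] at hx
        exact hE x ⟨hu.1.trans hx.1, hx.2.trans hv.2⟩)
      (hgc.intervalIntegrable u v)]
    have hnorm1 : ∀ y : ℝ, ‖-Complex.I * Complex.exp (Complex.I * F y)‖ = 1 := by
      intro y
      rw [norm_mul, norm_neg, Complex.norm_I, one_mul, mul_comm Complex.I,
        norm_exp_ofReal_mul_I]
    calc ‖_ - _‖ ≤ ‖-Complex.I * Complex.exp (Complex.I * F v)‖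
        + ‖-Complex.I * Complex.exp (Complex.I * F u)‖ := norm_sub_le _ _
      _ ≤ 2 := by rw [hnorm1, hnorm1]; norm_num
  -- the layer-cake function
  set S : Set (ℝ × ℝ) := {q : ℝ × ℝ | q.2 < φ q.1} with hS
  have hSm : MeasurableSet S := measurableSet_lt measurable_snd
    (hφc.measurable.comp measurable_fst)
  set H : ℝ → ℝ → ℂ := fun x t => Set.indicator S (fun q => g q.1) (x, t) with hH
  -- pointwise identity
  have hpoint : ∀ x ∈ Ioc a b, ∫ t in Ioc 0 M, H x t = Complex.exp (Complex.I * F x) := by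
    intro x hx
    have hxm : x ∈ Icc a b := Ioc_subset_Icc_self hx
    have e1 : ∀ t : ℝ, H x t = Set.indicator (Iio (φ x)) (fun _ => g x) t := by
      intro t
      rw [hH]
      simp only [Set.indicator_apply, hS, Set.mem_setOf_eq, Set.mem_Iio]
    rw [setIntegral_congr_fun measurableSet_Ioc (fun t _ => e1 t),
      setIntegral_indicator measurableSet_Iio, setIntegral_const]
    have e2 : Ioc 0 M ∩ Iio (φ x) = Ioo 0 (φ x) := by
      ext t
      simp only [Set.mem_inter_iff, Set.mem_Ioc, Set.mem_Iio, Set.mem_Ioo]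
      exact ⟨fun h => ⟨h.1.1, h.2⟩, fun h => ⟨⟨h.1, h.2.le.trans (hφle x)⟩, h.2⟩⟩
    rw [e2, Real.volume_real_Ioo_of_le (hφpos x).le, sub_zero]
    rw [Complex.real_smul, hφ, hg]
    simp only
    rw [hpid x hxm]
    rw [Complex.ofReal_inv]
    rw [inv_mul_eq_div]
    exact mul_div_cancel_left₀ _ (Complex.ofReal_ne_zero.2 (hε.trans_le (hsign x hxm)).ne')
  -- integrability on the product
  haveI : IsFiniteMeasure (volume.restrict (Ioc a b)) :=
    ⟨by rw [Measure.restrict_apply_univ, Real.volume_Ioc]; exact ENNReal.ofReal_lt_top⟩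
  haveI : IsFiniteMeasure (volume.restrict (Ioc 0 M)) :=
    ⟨by rw [Measure.restrict_apply_univ, Real.volume_Ioc]; exact ENNReal.ofReal_lt_top⟩
  have huncurry : Function.uncurry H = Set.indicator S (fun q => g q.1) := by
    funext q
    rw [hH]
    simp [Function.uncurry]
  have hint : Integrable (Function.uncurry H)
      ((volume.restrict (Ioc a b)).prod (volume.restrict (Ioc 0 M))) := by
    rw [huncurry]
    constructor
    · exact ((hgc.comp continuous_fst).aestronglyMeasurable).indicator hSm
    · apply HasFiniteIntegral.of_bounded (C := B)
      refine Filter.Eventually.of_forall (fun q => ?_)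
      exact (norm_indicator_le_norm_self _ q).trans (hnormg q.1)
  -- the inner-integral bound after swapping
  have hinner : ∀ t ∈ Ioc 0 M, ‖∫ x in Ioc a b, H x t‖ ≤ 2 := by
    intro t _
    have e1 : ∀ x : ℝ, H x t = Set.indicator {x | t < φ x} g x := by
      intro x
      rw [hH]
      simp only [Set.indicator_apply, hS, Set.mem_setOf_eq]
    have hmt : MeasurableSet {x : ℝ | t < φ x} := measurableSet_lt measurable_const hφc.measurable
    rw [setIntegral_congr_fun measurableSet_Ioc (fun x _ => e1 x),
      setIntegral_indicator hmt]
    set T : Set ℝ := {x | x ∈ Icc a b ∧ t < φ x} with hT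
    rcases eq_empty_or_nonempty T with hTe | hTne
    · have : Ioc a b ∩ {x | t < φ x} = (∅ : Set ℝ) := by
        rw [eq_empty_iff_forall_notMem]
        intro x hx
        have : x ∈ T := ⟨Ioc_subset_Icc_self hx.1, hx.2⟩
        rw [hTe] at this
        exact this
      rw [this]
      simp
    · have hbdb : BddBelow T := ⟨a, fun y hy => hy.1.1⟩
      have hbda : BddAbove T := ⟨b, fun y hy => hy.1.2⟩
      set u := sInf T with hu
      set v := sSup T with hv
      have hau : a ≤ u := le_csInf hTne (fun y hy => hy.1.1)
      have hvb : v ≤ b := csSup_le hTne (fun y hy => hy.1.2)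
      have huv : u ≤ v := csInf_le_csSup hTne hbdb hbda
      have hIoo : Ioo u v ⊆ T := by
        intro z hz
        obtain ⟨x, hxT, hxz⟩ := exists_lt_of_csInf_lt hTne hz.1
        obtain ⟨y, hyT, hzy⟩ := exists_lt_of_lt_csSup hTne hz.2
        exact (hODT t).out hxT hyT ⟨hxz.le, hzy.le⟩
      have hsub2 : Ioc a b ∩ {x | t < φ x} ⊆ Icc u v := by
        intro x hx
        have : x ∈ T := ⟨Ioc_subset_Icc_self hx.1, hx.2⟩
        exact ⟨csInf_le hbdb this, le_csSup hbda this⟩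
      have hsub1 : Ioo u v ⊆ Ioc a b ∩ {x | t < φ x} := by
        intro z hz
        have hzT := hIoo hz
        exact ⟨⟨hau.trans_lt hz.1, hz.2.le.trans hvb⟩, hzT.2⟩
      rw [setIntegral_congr_set (sandwich_ae hsub1 hsub2)]
      exact hkey u v ⟨hau, huv.trans hvb⟩ ⟨hau.trans huv, hvb⟩ huv
  -- put it together
  rw [intervalIntegral.integral_of_le hab,
    setIntegral_congr_fun measurableSet_Ioc (fun x hx => (hpoint x hx).symm),
    MeasureTheory.integral_integral_swap hint]
  have hfin : volume (Ioc (0:ℝ) M) < ⊤ := by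
    rw [Real.volume_Ioc]; exact ENNReal.ofReal_lt_top
  calc ‖∫ t in Ioc 0 M, ∫ x in Ioc a b, H x t‖
      ≤ 2 * (volume (Ioc (0:ℝ) M)).toReal :=
        norm_setIntegral_le_of_norm_le_const hfin hinner
    _ ≤ 4 / ε := by
        rw [Real.volume_Ioc, sub_zero, ENNReal.toReal_ofReal (by positivity)]
        rw [hM, div_eq_mul_inv]
        have : (0:ℝ) ≤ ε⁻¹ := by positivity
        nlinarith

open Set MeasureTheory intervalIntegral Complex in
theorem stmt_4 (a b ε : ℝ) (hab : a ≤ b) (hε : 0 < ε)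
    (F F' : ℝ → ℝ)
    (hderiv : ∀ x ∈ Set.Icc a b, HasDerivAt F (F' x) x)
    (hmono : MonotoneOn F' (Set.Icc a b) ∨ AntitoneOn F' (Set.Icc a b))
    (hsign : (∀ x ∈ Set.Icc a b, ε ≤ F' x) ∨ (∀ x ∈ Set.Icc a b, F' x ≤ -ε)) :
    ‖∫ x in a..b, Complex.exp (Complex.I * F x)‖ ≤ 4 / ε := by
  have hcontOn : ∀ (G G' : ℝ → ℝ), (∀ x ∈ Set.Icc a b, HasDerivAt G (G' x) x) →
      (MonotoneOn G' (Set.Icc a b) ∨ AntitoneOn G' (Set.Icc a b)) →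
      ContinuousOn G' (Set.Icc a b) := by
    intro G G' hd hm
    rcases hm with hm | hm
    · exact deriv_contOn hd hm
    · have h1 : ContinuousOn (fun x => -G' x) (Set.Icc a b) :=
        deriv_contOn (F := fun x => -G x) (fun x hx => (hd x hx).neg) (fun x hx y hy hxy => neg_le_neg (hm hx hy hxy))
      have := h1.neg
      convert this using 1
      ext x
      simp
  rcases hsign with hs | hs
  · exact core a b ε hab hε F F' hderiv (hcontOn F F' hderiv hmono) hmono hs
  · have hd2 : ∀ x ∈ Set.Icc a b, HasDerivAt (fun y => -F y) (-F' x) x :=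
      fun x hx => (hderiv x hx).neg
    have hm2 : MonotoneOn (fun x => -F' x) (Set.Icc a b) ∨ AntitoneOn (fun x => -F' x) (Set.Icc a b) := by
      rcases hmono with hm | hm
      · exact Or.inr (fun x hx y hy hxy => neg_le_neg (hm hx hy hxy))
      · exact Or.inl (fun x hx y hy hxy => neg_le_neg (hm hx hy hxy))
    have hs2 : ∀ x ∈ Set.Icc a b, ε ≤ -F' x := fun x hx => by
      have := hs x hx; linarith
    have key := core a b ε hab hε (fun y => -F y) (fun y => -F' y) hd2
      (hcontOn _ _ hd2 hm2) hm2 hs2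
    have hconj : ∀ x : ℝ, Complex.exp (Complex.I * F x)
        = starRingEnd ℂ (Complex.exp (Complex.I * ((-F x : ℝ) : ℂ))) := by
      intro x
      rw [← Complex.exp_conj]
      congr 1
      rw [map_mul, Complex.conj_I]
      rw [Complex.conj_ofReal]
      push_cast
      ring
    calc ‖∫ x in a..b, Complex.exp (Complex.I * F x)‖
        = ‖∫ x in a..b, starRingEnd ℂ (Complex.exp (Complex.I * ((-F x : ℝ) : ℂ)))‖ := by
          congr 1
          exact intervalIntegral.integral_congr (fun x _ => hconj x)
      _ = ‖starRingEnd ℂ (∫ x in a..b, Complex.exp (Complex.I * ((-F x : ℝ) : ℂ)))‖ := by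
          rw [intervalIntegral.integral_of_le hab, intervalIntegral.integral_of_le hab,
            integral_conj]
      _ = ‖∫ x in a..b, Complex.exp (Complex.I * ((-F x : ℝ) : ℂ))‖ := RCLike.norm_conj _
      _ ≤ 4 / ε := key
end

section
/- Let F : [a,b] → ℝ be twice differentiable with either F″(x) ≥ ε > 0 for all x ∈ [a,b] or F″(x) ≤ −ε < 0 for all x ∈ [a,b]. Then |∫_a^b e^{iF(x)} dx| ≤ 8/√ε. -/
open intervalIntegral Set Complex MeasureTheory

lemma cexp_deriv_aux (F F' : ℝ → ℝ) (x : ℝ) (h : HasDerivAt F (F' x) x) :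
    HasDerivAt (fun y => Complex.exp (Complex.I * F y)) (Complex.I * F' x * Complex.exp (Complex.I * F x)) x := by
  have h1 : HasDerivAt (fun y => Complex.I * (F y : ℂ)) (Complex.I * F' x) x :=
    (h.ofReal_comp).const_mul Complex.I
  simpa [mul_comm] using h1.cexp

lemma norm_cexp_I_mul (r : ℝ) : ‖Complex.exp (Complex.I * r)‖ = 1 := by
  rw [mul_comm]
  exact Complex.norm_exp_ofReal_mul_I r

lemma vdc_ibp (u v lam : ℝ) (huv : u ≤ v) (hlam : 0 < lam)
    (F F' F'' : ℝ → ℝ)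
    (hd : ∀ x ∈ Set.Icc u v, HasDerivAt F (F' x) x)
    (hd' : ∀ x ∈ Set.Icc u v, HasDerivAt F' (F'' x) x)
    (h2 : ∀ x ∈ Set.Icc u v, 0 ≤ F'' x)
    (hlow : (∀ x ∈ Set.Icc u v, lam ≤ F' x) ∨ (∀ x ∈ Set.Icc u v, F' x ≤ -lam)) :
    ‖∫ x in u..v, Complex.exp (Complex.I * F x)‖ ≤ 3 / lam := by
  have huIcc : Set.uIcc u v = Set.Icc u v := Set.uIcc_of_le huv
  have hne : ∀ x ∈ Set.Icc u v, F' x ≠ 0 := by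
    intro x hx
    rcases hlow with h | h
    · exact ne_of_gt (lt_of_lt_of_le hlam (h x hx))
    · exact ne_of_lt (lt_of_le_of_lt (h x hx) (by linarith))
  have habs : ∀ x ∈ Set.Icc u v, lam ≤ |F' x| := by
    intro x hx
    rcases hlow with h | h
    · exact le_trans (h x hx) (le_abs_self _)
    · rw [abs_of_neg (by nlinarith [h x hx])]; linarith [h x hx]
  set ρ : ℝ → ℝ := fun x => F'' x / (F' x) ^ 2 with hρ
  have hρd : ∀ x ∈ Set.Icc u v, HasDerivAt (fun y => -(F' y)⁻¹) (ρ x) x := by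
    intro x hx
    have := ((hd' x hx).inv (hne x hx)).neg
    exact this.congr_deriv (by simp [hρ]; ring)
  have hρnn : ∀ x ∈ Set.Icc u v, 0 ≤ ρ x := fun x hx => div_nonneg (h2 x hx) (sq_nonneg _)
  have hcontF' : ContinuousOn F' (Set.Icc u v) :=
    fun x hx => (hd' x hx).continuousAt.continuousWithinAt
  have hρint : IntervalIntegrable ρ volume u v := by
    apply intervalIntegrable_deriv_of_nonneg (g := fun y => -(F' y)⁻¹)
    · rw [huIcc]; exact ((hcontF'.inv₀ hne).neg)
    · intro x hx
      rw [min_eq_left huv, max_eq_right huv] at hx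
      exact hρd x (Set.Ioo_subset_Icc_self hx)
    · intro x hx
      rw [min_eq_left huv, max_eq_right huv] at hx
      exact hρnn x (Set.Ioo_subset_Icc_self hx)
  have hρeq : ∫ x in u..v, ρ x = (F' u)⁻¹ - (F' v)⁻¹ := by
    rw [integral_eq_sub_of_hasDerivAt (fun x hx => hρd x (huIcc ▸ hx)) hρint]
    ring
  have hρbd : ∫ x in u..v, ρ x ≤ 1 / lam := by
    rw [hρeq]
    have hu : u ∈ Set.Icc u v := Set.left_mem_Icc.2 huv
    have hv : v ∈ Set.Icc u v := Set.right_mem_Icc.2 huv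
    rcases hlow with h | h
    · have h1 : lam ≤ F' u := h u hu
      have h2' : 0 < F' v := lt_of_lt_of_le hlam (h v hv)
      have : (F' u)⁻¹ ≤ 1 / lam := by
        rw [one_div]; exact inv_anti₀ hlam h1
      have : 0 < (F' v)⁻¹ := inv_pos.2 h2'
      linarith [inv_anti₀ hlam (h u hu)]
    · have h1 : F' v ≤ -lam := h v hv
      have h2' : F' u < 0 := lt_of_le_of_lt (h u hu) (by linarith)
      have hvneg : F' v < 0 := lt_of_le_of_lt h1 (by linarith)
      have : -(F' v)⁻¹ ≤ 1 / lam := by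
        rw [one_div, ← inv_neg]
        exact inv_anti₀ hlam (by linarith)
      have : (F' u)⁻¹ < 0 := inv_neg''.2 h2'
      have := inv_anti₀ hlam (show lam ≤ -F' v by linarith)
      rw [inv_neg] at this
      linarith [inv_neg''.2 h2']
  -- the antiderivative g
  set g : ℝ → ℂ := fun x => Complex.exp (Complex.I * F x) / (Complex.I * F' x) with hg
  have hgd : ∀ x ∈ Set.Icc u v,
      HasDerivAt g (Complex.exp (Complex.I * F x) + (ρ x : ℂ) * (Complex.I * Complex.exp (Complex.I * F x))) x := by
    intro x hx
    have hn := cexp_deriv_aux F F' x (hd x hx)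
    have hD : HasDerivAt (fun y => Complex.I * (F' y : ℂ)) (Complex.I * F'' x) x :=
      ((hd' x hx).ofReal_comp).const_mul Complex.I
    have hD0 : (Complex.I * (F' x : ℂ)) ≠ 0 :=
      mul_ne_zero Complex.I_ne_zero (Complex.ofReal_ne_zero.2 (hne x hx))
    have := hn.div hD hD0
    refine this.congr_deriv ?_
    have hF'ne : (F' x : ℂ) ≠ 0 := Complex.ofReal_ne_zero.2 (hne x hx)
    field_simp [hρ]
    ring_nf
    have h3 : (Complex.I) ^ 3 = -Complex.I := by
      simp [pow_succ, Complex.I_sq]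
    simp only [hρ, Complex.I_sq, Complex.ofReal_div, Complex.ofReal_pow]
    field_simp
    ring
  have hcontexp : ContinuousOn (fun x => Complex.exp (Complex.I * F x)) (Set.Icc u v) :=
    fun x hx => ((cexp_deriv_aux F F' x (hd x hx)).continuousAt).continuousWithinAt
  have hint1 : IntervalIntegrable (fun x => Complex.exp (Complex.I * F x)) volume u v :=
    ContinuousOn.intervalIntegrable (huIcc ▸ hcontexp)
  have hρintC : IntervalIntegrable (fun x => (ρ x : ℂ)) volume u v :=
    ⟨hρint.1.ofReal, hρint.2.ofReal⟩
  have hint2 : IntervalIntegrable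
      (fun x => (ρ x : ℂ) * (Complex.I * Complex.exp (Complex.I * F x))) volume u v := by
    apply hρintC.mul_continuousOn
    rw [huIcc]
    exact continuousOn_const.mul hcontexp
  have hFTC : ∫ x in u..v, (Complex.exp (Complex.I * F x)
      + (ρ x : ℂ) * (Complex.I * Complex.exp (Complex.I * F x))) = g v - g u :=
    integral_eq_sub_of_hasDerivAt (fun x hx => hgd x (huIcc ▸ hx)) (hint1.add hint2)
  have hsplit : ∫ x in u..v, Complex.exp (Complex.I * F x)
      = g v - g u - ∫ x in u..v, (ρ x : ℂ) * (Complex.I * Complex.exp (Complex.I * F x)) := by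
    rw [← hFTC, integral_add hint1 hint2]
    ring
  have hgbd : ∀ x ∈ Set.Icc u v, ‖g x‖ ≤ 1 / lam := by
    intro x hx
    rw [hg]
    simp only [norm_div, norm_cexp_I_mul, norm_mul, Complex.norm_I, one_mul,
      Complex.norm_real, Real.norm_eq_abs]
    rw [one_div, one_div]
    exact inv_anti₀ hlam (habs x hx)
  have herr : ‖∫ x in u..v, (ρ x : ℂ) * (Complex.I * Complex.exp (Complex.I * F x))‖ ≤ 1 / lam := by
    refine le_trans (norm_integral_le_integral_norm huv) (le_trans (le_of_eq ?_) hρbd)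
    apply integral_congr
    intro x hx
    rw [huIcc] at hx
    simp only [norm_mul, Complex.norm_I, norm_cexp_I_mul, one_mul, mul_one,
      Complex.norm_real, Real.norm_eq_abs]
    exact abs_of_nonneg (hρnn x hx)
  rw [hsplit]
  have hu : u ∈ Set.Icc u v := Set.left_mem_Icc.2 huv
  have hv : v ∈ Set.Icc u v := Set.right_mem_Icc.2 huv
  have t1 := norm_sub_le (g v - g u) (∫ x in u..v, (ρ x : ℂ) * (Complex.I * Complex.exp (Complex.I * F x)))
  have t2 := norm_sub_le (g v) (g u)
  have := hgbd u hu
  have := hgbd v hv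
  have h3 : (3:ℝ)/lam = 1/lam + 1/lam + 1/lam := by ring
  linarith

lemma vdc_pos (a b ε : ℝ) (hab : a ≤ b) (hε : 0 < ε)
    (F F' F'' : ℝ → ℝ)
    (hd : ∀ x ∈ Set.Icc a b, HasDerivAt F (F' x) x)
    (hd' : ∀ x ∈ Set.Icc a b, HasDerivAt F' (F'' x) x)
    (h2 : ∀ x ∈ Set.Icc a b, ε ≤ F'' x) :
    ‖∫ x in a..b, Complex.exp (Complex.I * F x)‖ ≤ 8 / Real.sqrt ε := by
  classical
  set lam := Real.sqrt ε with hlamdef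
  have hlam : 0 < lam := Real.sqrt_pos.2 hε
  have hlam2 : lam ^ 2 = ε := Real.sq_sqrt hε.le
  -- monotonicity-type key inequality
  have key : ∀ x ∈ Set.Icc a b, ∀ y ∈ Set.Icc a b, x ≤ y → ε * (y - x) ≤ F' y - F' x := by
    intro x hx y hy hxy
    rcases eq_or_lt_of_le hxy with rfl | hlt
    · simp
    · have hsub : Set.Icc x y ⊆ Set.Icc a b := Set.Icc_subset_Icc hx.1 hy.2
      have hcont : ContinuousOn F' (Set.Icc x y) :=
        fun z hz => ((hd' z (hsub hz)).continuousAt).continuousWithinAt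
      have hdiff : ∀ z ∈ Set.Ioo x y, HasDerivAt F' (F'' z) z :=
        fun z hz => hd' z (hsub (Set.Ioo_subset_Icc_self hz))
      obtain ⟨c, hc, hceq⟩ := exists_hasDerivAt_eq_slope F' F'' hlt hcont hdiff
      have hεc : ε ≤ F'' c := h2 c (hsub (Set.Ioo_subset_Icc_self hc))
      have : ε ≤ (F' y - F' x) / (y - x) := hceq ▸ hεc
      calc ε * (y - x) ≤ ((F' y - F' x) / (y - x)) * (y - x) := by
            apply mul_le_mul_of_nonneg_right this (by linarith)
        _ = F' y - F' x := by
            rw [div_mul_eq_mul_div, mul_div_assoc, div_self (by linarith), mul_one]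
  have hmono : ∀ x ∈ Set.Icc a b, ∀ y ∈ Set.Icc a b, x ≤ y → F' x ≤ F' y := by
    intro x hx y hy hxy
    have := key x hx y hy hxy
    nlinarith
  have hcontF' : ∀ x ∈ Set.Icc a b, ContinuousAt F' x := fun x hx => (hd' x hx).continuousAt
  set S := {x | x ∈ Set.Icc a b ∧ F' x ≤ -lam} with hSdef
  set T := {x | x ∈ Set.Icc a b ∧ lam ≤ F' x} with hTdef
  have hSbdd : BddAbove S := ⟨b, fun x hx => hx.1.2⟩
  have hTbdd : BddBelow T := ⟨a, fun x hx => hx.1.1⟩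
  obtain ⟨c, hac, hcb, hcleft, hcval⟩ :
      ∃ c, a ≤ c ∧ c ≤ b ∧ (c = a ∨ ∀ x ∈ Set.Icc a c, F' x ≤ -lam) ∧ (c = b ∨ -lam ≤ F' c) := by
    by_cases hS : S.Nonempty
    · obtain ⟨s₀, hs₀⟩ := hS
      have hac : a ≤ sSup S := le_trans hs₀.1.1 (le_csSup hSbdd hs₀)
      have hcb : sSup S ≤ b := csSup_le ⟨s₀, hs₀⟩ (fun x hx => hx.1.2)
      have hcIcc : sSup S ∈ Set.Icc a b := ⟨hac, hcb⟩
      have hFc : F' (sSup S) ≤ -lam := by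
        by_contra hcon
        push_neg at hcon
        have hev : ∀ᶠ y in nhds (sSup S), -lam < F' y :=
          (hcontF' _ hcIcc).eventually (eventually_gt_nhds hcon)
        obtain ⟨δ, hδ, hball⟩ := Metric.eventually_nhds_iff.1 hev
        obtain ⟨s, hsS, hs⟩ := exists_lt_of_lt_csSup ⟨s₀, hs₀⟩
          (show sSup S - δ < sSup S by linarith)
        have hsle : s ≤ sSup S := le_csSup hSbdd hsS
        have : -lam < F' s := hball (by rw [Real.dist_eq, abs_sub_lt_iff]; constructor <;> linarith)
        linarith [hsS.2]
      refine ⟨sSup S, hac, hcb, Or.inr ?_, ?_⟩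
      · intro x hx
        exact le_trans (hmono x ⟨hx.1, le_trans hx.2 hcb⟩ _ hcIcc hx.2) hFc
      · rcases eq_or_lt_of_le hcb with heq | hlt
        · exact Or.inl heq
        · right
          by_contra hcon
          push_neg at hcon
          have hev : ∀ᶠ y in nhds (sSup S), F' y < -lam :=
            (hcontF' _ hcIcc).eventually (eventually_lt_nhds hcon)
          obtain ⟨δ, hδ, hball⟩ := Metric.eventually_nhds_iff.1 hev
          set y := min (sSup S + δ/2) b with hydef
          have hy1 : sSup S < y := lt_min (by linarith) hlt
          have hy2 : y ∈ Set.Icc a b := ⟨le_trans hac hy1.le, min_le_right _ _⟩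
          have hy3 : F' y < -lam := hball (by
            rw [Real.dist_eq, abs_sub_lt_iff]
            have : y ≤ sSup S + δ/2 := min_le_left _ _
            constructor <;> linarith)
          have : y ≤ sSup S := le_csSup hSbdd ⟨hy2, hy3.le⟩
          linarith
    · refine ⟨a, le_refl a, hab, Or.inl rfl, Or.inr ?_⟩
      by_contra hcon
      push_neg at hcon
      exact hS ⟨a, Set.left_mem_Icc.2 hab, hcon.le⟩
  obtain ⟨d, had, hdb, hdright, hdval⟩ :
      ∃ d, a ≤ d ∧ d ≤ b ∧ (d = b ∨ ∀ x ∈ Set.Icc d b, lam ≤ F' x) ∧ (d = a ∨ F' d ≤ lam) := by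
    by_cases hT : T.Nonempty
    · obtain ⟨s₀, hs₀⟩ := hT
      have had : a ≤ sInf T := le_csInf ⟨s₀, hs₀⟩ (fun x hx => hx.1.1)
      have hdb : sInf T ≤ b := le_trans (csInf_le hTbdd hs₀) hs₀.1.2
      have hdIcc : sInf T ∈ Set.Icc a b := ⟨had, hdb⟩
      have hFd : lam ≤ F' (sInf T) := by
        by_contra hcon
        push_neg at hcon
        have hev : ∀ᶠ y in nhds (sInf T), F' y < lam :=
          (hcontF' _ hdIcc).eventually (eventually_lt_nhds hcon)
        obtain ⟨δ, hδ, hball⟩ := Metric.eventually_nhds_iff.1 hev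
        obtain ⟨s, hsT, hs⟩ := exists_lt_of_csInf_lt ⟨s₀, hs₀⟩
          (show sInf T < sInf T + δ by linarith)
        have hsle : sInf T ≤ s := csInf_le hTbdd hsT
        have : F' s < lam := hball (by rw [Real.dist_eq, abs_sub_lt_iff]; constructor <;> linarith)
        linarith [hsT.2]
      refine ⟨sInf T, had, hdb, Or.inr ?_, ?_⟩
      · intro x hx
        exact le_trans hFd (hmono _ hdIcc x ⟨le_trans had hx.1, hx.2⟩ hx.1)
      · rcases eq_or_lt_of_le had with heq | hlt
        · exact Or.inl heq.symm
        · right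
          by_contra hcon
          push_neg at hcon
          have hev : ∀ᶠ y in nhds (sInf T), lam < F' y :=
            (hcontF' _ hdIcc).eventually (eventually_gt_nhds hcon)
          obtain ⟨δ, hδ, hball⟩ := Metric.eventually_nhds_iff.1 hev
          set y := max (sInf T - δ/2) a with hydef
          have hy1 : y < sInf T := max_lt (by linarith) hlt
          have hy2 : y ∈ Set.Icc a b := ⟨le_max_right _ _, le_trans hy1.le hdb⟩
          have hy3 : lam < F' y := hball (by
            rw [Real.dist_eq, abs_sub_lt_iff]
            have : sInf T - δ/2 ≤ y := le_max_left _ _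
            constructor <;> linarith)
          have : sInf T ≤ y := csInf_le hTbdd ⟨hy2, hy3.le⟩
          linarith
    · refine ⟨b, hab, le_refl b, Or.inl rfl, Or.inr ?_⟩
      by_contra hcon
      push_neg at hcon
      exact hT ⟨b, Set.right_mem_Icc.2 hab, hcon.le⟩
  -- c ≤ d
  have hcd : c ≤ d := by
    rcases hcleft with rfl | hc
    · exact had
    rcases hdright with rfl | hd'2
    · exact hcb
    by_contra hcon
    push_neg at hcon
    have h1 : F' d ≤ -lam := hc d ⟨had, hcon.le⟩
    have h2' : lam ≤ F' d := hd'2 d ⟨le_refl d, hdb⟩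
    linarith
  -- middle length bound
  have hmid : d - c ≤ 2 / lam := by
    rcases hcval with rfl | hc
    · have : d = c := le_antisymm hdb hcd
      rw [this]
      simp
      positivity
    rcases hdval with rfl | hd'2
    · have : d = c := le_antisymm hac hcd
      rw [this]
      simp
      positivity
    have hk := key c ⟨hac, hcb⟩ d ⟨had, hdb⟩ hcd
    have h2l : ε * (d - c) ≤ 2 * lam := by linarith
    rw [le_div_iff₀ hlam]
    nlinarith [hlam, hlam2, h2l]
  -- assembly
  have hcontexp : ContinuousOn (fun x => Complex.exp (Complex.I * F x)) (Set.Icc a b) :=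
    fun x hx => ((cexp_deriv_aux F F' x (hd x hx)).continuousAt).continuousWithinAt
  have hInt : ∀ u v : ℝ, u ∈ Set.Icc a b → v ∈ Set.Icc a b →
      IntervalIntegrable (fun x => Complex.exp (Complex.I * F x)) volume u v := by
    intro u v hu hv
    exact ContinuousOn.intervalIntegrable (hcontexp.mono (Set.uIcc_subset_Icc hu hv))
  have hcIcc : c ∈ Set.Icc a b := ⟨hac, hcb⟩
  have hdIcc : d ∈ Set.Icc a b := ⟨had, hdb⟩
  have haIcc : a ∈ Set.Icc a b := Set.left_mem_Icc.2 hab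
  have hbIcc : b ∈ Set.Icc a b := Set.right_mem_Icc.2 hab
  have e2 := integral_add_adjacent_intervals (μ := volume) (hInt c d hcIcc hdIcc) (hInt d b hdIcc hbIcc)
  have e1 := integral_add_adjacent_intervals (μ := volume) (hInt a c haIcc hcIcc) (hInt c b hcIcc hbIcc)
  have hL : ‖∫ x in a..c, Complex.exp (Complex.I * F x)‖ ≤ 3 / lam := by
    rcases hcleft with heq | h
    · rw [heq]
      simp only [intervalIntegral.integral_same, norm_zero]
      positivity
    · exact vdc_ibp a c lam hac hlam F F' F''
        (fun x hx => hd x (Set.Icc_subset_Icc_right hcb hx))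
        (fun x hx => hd' x (Set.Icc_subset_Icc_right hcb hx))
        (fun x hx => le_trans hε.le (h2 x (Set.Icc_subset_Icc_right hcb hx)))
        (Or.inr h)
  have hR : ‖∫ x in d..b, Complex.exp (Complex.I * F x)‖ ≤ 3 / lam := by
    rcases hdright with heq | h
    · rw [heq]
      simp only [intervalIntegral.integral_same, norm_zero]
      positivity
    · exact vdc_ibp d b lam hdb hlam F F' F''
        (fun x hx => hd x (Set.Icc_subset_Icc_left had hx))
        (fun x hx => hd' x (Set.Icc_subset_Icc_left had hx))
        (fun x hx => le_trans hε.le (h2 x (Set.Icc_subset_Icc_left had hx)))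
        (Or.inl h)
  have hM : ‖∫ x in c..d, Complex.exp (Complex.I * F x)‖ ≤ 2 / lam := by
    have h1 : ‖∫ x in c..d, Complex.exp (Complex.I * F x)‖ ≤ 1 * |d - c| := by
      apply intervalIntegral.norm_integral_le_of_norm_le_const
      intro x _
      rw [norm_cexp_I_mul]
    rw [one_mul, _root_.abs_of_nonneg (by linarith : (0:ℝ) ≤ d - c)] at h1
    linarith
  have heq8 : (8:ℝ) / lam = 3 / lam + 2 / lam + 3 / lam := by ring
  rw [← e1, ← e2]
  calc ‖(∫ x in a..c, Complex.exp (Complex.I * F x))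
        + ((∫ x in c..d, Complex.exp (Complex.I * F x)) + ∫ x in d..b, Complex.exp (Complex.I * F x))‖
      ≤ ‖∫ x in a..c, Complex.exp (Complex.I * F x)‖
        + (‖∫ x in c..d, Complex.exp (Complex.I * F x)‖ + ‖∫ x in d..b, Complex.exp (Complex.I * F x)‖) :=
        norm_add_le_of_le le_rfl (norm_add_le _ _)
    _ ≤ 8 / lam := by rw [heq8]; linarith

lemma intervalIntegral_conj' (f : ℝ → ℂ) (a b : ℝ) :
    ∫ x in a..b, (starRingEnd ℂ) (f x) = (starRingEnd ℂ) (∫ x in a..b, f x) := by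
  rw [intervalIntegral, intervalIntegral, integral_conj, integral_conj, map_sub]

theorem stmt_5 (a b ε : ℝ) (hab : a ≤ b) (hε : 0 < ε)
    (F F' F'' : ℝ → ℝ)
    (hderiv : ∀ x ∈ Set.Icc a b, HasDerivAt F (F' x) x)
    (hderiv' : ∀ x ∈ Set.Icc a b, HasDerivAt F' (F'' x) x)
    (hsign : (∀ x ∈ Set.Icc a b, ε ≤ F'' x) ∨ (∀ x ∈ Set.Icc a b, F'' x ≤ -ε)) :
    ‖∫ x in a..b, Complex.exp (Complex.I * F x)‖ ≤ 8 / Real.sqrt ε := by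
  rcases hsign with h | h
  · exact vdc_pos a b ε hab hε F F' F'' hderiv hderiv' h
  · have hneg := vdc_pos a b ε hab hε (fun x => -F x) (fun x => -F' x) (fun x => -F'' x)
      (fun x hx => (hderiv x hx).neg) (fun x hx => (hderiv' x hx).neg)
      (fun x hx => by simp only [le_neg]; linarith [h x hx])
    have heq : (∫ x in a..b, Complex.exp (Complex.I * ((-F x : ℝ) : ℂ)))
        = (starRingEnd ℂ) (∫ x in a..b, Complex.exp (Complex.I * F x)) := by
      rw [← intervalIntegral_conj']
      apply intervalIntegral.integral_congr
      intro x _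
      show Complex.exp (Complex.I * ((-F x : ℝ) : ℂ)) = (starRingEnd ℂ) (Complex.exp (Complex.I * F x))
      rw [← Complex.exp_conj]
      congr 1
      simp [map_mul, Complex.conj_I, Complex.conj_ofReal]
    rw [heq, RCLike.norm_conj] at hneg
    exact hneg
end

section
/- As T → ∞, ∑_{1 ≤ m < n ≤ T} 1/(√(mn) · log(n/m)) = O(T log T). -/
open Filter Asymptotics

-- key pointwise bound
lemma key (m n : ℝ) (hm : 0 < m) (hmn : m < n) :
    1 / (Real.sqrt (m * n) * Real.log (n / m)) ≤
      2 / Real.sqrt (m * n) + 2 / (n - m) := by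
  have hn : 0 < n := hm.trans hmn
  have hs : 0 < Real.sqrt (m * n) := Real.sqrt_pos.2 (by positivity)
  have hlogpos : 0 < Real.log (n / m) := Real.log_pos ((one_lt_div hm).2 hmn)
  have h1 : Real.log (m / n) ≤ m / n - 1 := Real.log_le_sub_one_of_pos (by positivity)
  have h2 : Real.log (n / m) = - Real.log (m / n) := by
    rw [Real.log_div hn.ne' hm.ne', Real.log_div hm.ne' hn.ne']; ring
  have hlog : (n - m) / n ≤ Real.log (n / m) := by
    rw [h2]
    have : (n - m) / n = 1 - m / n := by field_simp
    linarith
  have hnm : 0 < n - m := by linarith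
  have step1 : 1 / (Real.sqrt (m * n) * Real.log (n / m)) ≤
      n / (Real.sqrt (m * n) * (n - m)) := by
    have hd : 0 < Real.sqrt (m * n) * ((n - m) / n) := by positivity
    have : 1 / (Real.sqrt (m * n) * Real.log (n / m)) ≤
        1 / (Real.sqrt (m * n) * ((n - m) / n)) := by
      apply one_div_le_one_div_of_le hd
      exact mul_le_mul_of_nonneg_left hlog hs.le
    calc 1 / (Real.sqrt (m * n) * Real.log (n / m)) ≤
        1 / (Real.sqrt (m * n) * ((n - m) / n)) := this
      _ = n / (Real.sqrt (m * n) * (n - m)) := by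
          field_simp
  refine step1.trans ?_
  rcases le_or_gt (2 * m) n with h | h
  · -- n ≥ 2m : bound by 2/√(mn)
    have hb : n / (Real.sqrt (m * n) * (n - m)) ≤ 2 / Real.sqrt (m * n) := by
      rw [div_le_div_iff₀ (by positivity) hs]
      nlinarith [hs, hnm]
    have : (0:ℝ) ≤ 2 / (n - m) := by positivity
    linarith
  · -- n < 2m : bound by 2/(n-m)
    have hsq : Real.sqrt (m * n) ^ 2 = m * n := Real.sq_sqrt (by positivity)
    have hle : n ≤ 2 * Real.sqrt (m * n) := by
      nlinarith [hs, hsq]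
    have hb : n / (Real.sqrt (m * n) * (n - m)) ≤ 2 / (n - m) := by
      rw [div_le_div_iff₀ (by positivity) hnm]
      nlinarith [hs, hnm]
    have : (0:ℝ) ≤ 2 / Real.sqrt (m * n) := by positivity
    linarith


lemma sqrtSum (n : ℕ) : ∑ m ∈ Finset.Icc 1 n, 1 / Real.sqrt m ≤ 2 * Real.sqrt n := by
  induction n with
  | zero => simp
  | succ n ih =>
    rw [Finset.sum_Icc_succ_top (by omega : 1 ≤ n + 1)]
    have ha := Real.sqrt_nonneg (n : ℝ)
    have hb : (0:ℝ) < Real.sqrt ((n:ℝ) + 1) := Real.sqrt_pos.2 (by positivity)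
    have ha2 : Real.sqrt (n : ℝ) ^ 2 = n := Real.sq_sqrt (by positivity)
    have hb2 : Real.sqrt ((n:ℝ) + 1) ^ 2 = (n:ℝ) + 1 := Real.sq_sqrt (by positivity)
    have hkey : 1 / Real.sqrt ((n:ℝ) + 1) ≤
        2 * Real.sqrt ((n:ℝ) + 1) - 2 * Real.sqrt (n:ℝ) := by
      rw [div_le_iff₀ hb]
      nlinarith [sq_nonneg (Real.sqrt ((n:ℝ)+1) - Real.sqrt (n:ℝ))]
    have hcast : ((n + 1 : ℕ) : ℝ) = (n:ℝ) + 1 := by push_cast; ring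
    rw [hcast]
    linarith

lemma harmSum (n : ℕ) : ∑ m ∈ Finset.Icc 1 n, 1 / (m : ℝ) ≤ 1 + Real.log n := by
  induction n with
  | zero => simp
  | succ n ih =>
    rw [Finset.sum_Icc_succ_top (by omega : 1 ≤ n + 1)]
    rcases Nat.eq_zero_or_pos n with h | h
    · subst h; simp
    · have hn : (0:ℝ) < n := by exact_mod_cast h
      have h1 : Real.log ((n:ℝ) / ((n:ℝ)+1)) ≤ (n:ℝ)/((n:ℝ)+1) - 1 :=
        Real.log_le_sub_one_of_pos (by positivity)
      have h2 : Real.log ((n:ℝ) / ((n:ℝ)+1)) = Real.log n - Real.log ((n:ℝ)+1) :=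
        Real.log_div hn.ne' (by positivity)
      have h3 : (n:ℝ)/((n:ℝ)+1) - 1 = -(1/((n:ℝ)+1)) := by field_simp; ring
      have hcast : ((n + 1 : ℕ) : ℝ) = (n:ℝ) + 1 := by push_cast; ring
      rw [hcast]
      have : 1 / ((n:ℝ)+1) ≤ Real.log ((n:ℝ)+1) - Real.log n := by
        rw [h2, h3] at h1; linarith
      linarith

-- reindexing
lemma reflectSum (n : ℕ) :
    ∑ m ∈ Finset.Ico 1 n, 1 / ((n:ℝ) - m) = ∑ m ∈ Finset.Ico 1 n, 1 / (m:ℝ) := by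
  apply Finset.sum_nbij' (fun m => n - m) (fun m => n - m)
  · intro a ha; simp only [Finset.mem_Ico] at *; omega
  · intro a ha; simp only [Finset.mem_Ico] at *; omega
  · intro a ha; simp only [Finset.mem_Ico] at ha; omega
  · intro a ha; simp only [Finset.mem_Ico] at ha; omega
  · intro a ha
    simp only [Finset.mem_Ico] at ha
    have : ((n - a : ℕ) : ℝ) = (n:ℝ) - a := by
      have : a ≤ n := by omega
      push_cast [this]; ring
    rw [this]

lemma innerSum (n : ℕ) (hn : 1 ≤ n) :
    ∑ m ∈ Finset.Ico 1 n, 1 / (Real.sqrt ((m : ℝ) * n) * Real.log ((n : ℝ) / m))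
      ≤ 6 + 2 * Real.log n := by
  have hnR : (0:ℝ) < n := by exact_mod_cast hn
  have hsn : (0:ℝ) < Real.sqrt n := Real.sqrt_pos.2 hnR
  have hsub : Finset.Ico 1 n ⊆ Finset.Icc 1 n := by
    intro a ha; simp only [Finset.mem_Ico, Finset.mem_Icc] at *; omega
  have step1 : ∑ m ∈ Finset.Ico 1 n, 1 / (Real.sqrt ((m : ℝ) * n) * Real.log ((n : ℝ) / m))
      ≤ ∑ m ∈ Finset.Ico 1 n, (2 / Real.sqrt ((m:ℝ) * n) + 2 / ((n:ℝ) - m)) := by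
    apply Finset.sum_le_sum
    intro m hm
    simp only [Finset.mem_Ico] at hm
    have h1 : (0:ℝ) < m := by exact_mod_cast hm.1
    have h2 : (m:ℝ) < n := by exact_mod_cast hm.2
    exact key m n h1 h2
  have stepA : ∑ m ∈ Finset.Ico 1 n, 2 / Real.sqrt ((m:ℝ) * n) ≤ 4 := by
    have heq : ∀ m ∈ Finset.Ico 1 n, 2 / Real.sqrt ((m:ℝ) * n)
        = (2 / Real.sqrt n) * (1 / Real.sqrt m) := by
      intro m hm
      rw [Real.sqrt_mul (by positivity)]
      rw [mul_comm (Real.sqrt (m:ℝ))]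
      field_simp
    rw [Finset.sum_congr rfl heq, ← Finset.mul_sum]
    have hle : ∑ m ∈ Finset.Ico 1 n, 1 / Real.sqrt (m:ℝ)
        ≤ ∑ m ∈ Finset.Icc 1 n, 1 / Real.sqrt (m:ℝ) :=
      Finset.sum_le_sum_of_subset_of_nonneg hsub (fun i _ _ => by positivity)
    have := hle.trans (sqrtSum n)
    calc (2 / Real.sqrt n) * ∑ m ∈ Finset.Ico 1 n, 1 / Real.sqrt (m:ℝ)
        ≤ (2 / Real.sqrt n) * (2 * Real.sqrt n) := by
          apply mul_le_mul_of_nonneg_left this (by positivity)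
      _ = 4 := by field_simp; ring
  have stepB : ∑ m ∈ Finset.Ico 1 n, 2 / ((n:ℝ) - m) ≤ 2 + 2 * Real.log n := by
    have : ∑ m ∈ Finset.Ico 1 n, 2 / ((n:ℝ) - m)
        = 2 * ∑ m ∈ Finset.Ico 1 n, 1 / ((n:ℝ) - m) := by
      rw [Finset.mul_sum]; apply Finset.sum_congr rfl; intro m _; ring
    rw [this, reflectSum n]
    have hle : ∑ m ∈ Finset.Ico 1 n, 1 / (m:ℝ) ≤ ∑ m ∈ Finset.Icc 1 n, 1 / (m:ℝ) :=
      Finset.sum_le_sum_of_subset_of_nonneg hsub (fun i _ _ => by positivity)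
    have := hle.trans (harmSum n)
    linarith
  rw [Finset.sum_add_distrib] at step1
  linarith

theorem stmt_6 :
    (fun T : ℝ => ∑ n ∈ Finset.Icc 1 ⌊T⌋₊, ∑ m ∈ Finset.Ico 1 n,
        1 / (Real.sqrt ((m : ℝ) * n) * Real.log ((n : ℝ) / m)))
      =O[atTop] (fun T : ℝ => T * Real.log T) := by
  rw [isBigO_iff]
  refine ⟨8, ?_⟩
  filter_upwards [eventually_ge_atTop (3:ℝ)] with T hT
  have hT0 : (0:ℝ) < T := by linarith
  have hlogT : 1 ≤ Real.log T := by
    rw [Real.le_log_iff_exp_le hT0]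
    calc Real.exp 1 ≤ 2.7182818286 := (Real.exp_one_lt_d9).le
      _ ≤ T := by linarith
  have hlogT0 : 0 ≤ Real.log T := by linarith
  set N := ⌊T⌋₊ with hN
  have hNT : (N:ℝ) ≤ T := Nat.floor_le hT0.le
  -- nonnegativity of LHS
  have hnonneg : 0 ≤ ∑ n ∈ Finset.Icc 1 N, ∑ m ∈ Finset.Ico 1 n,
      1 / (Real.sqrt ((m : ℝ) * n) * Real.log ((n : ℝ) / m)) := by
    apply Finset.sum_nonneg; intro n hn
    apply Finset.sum_nonneg; intro m hm
    simp only [Finset.mem_Ico] at hm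
    have h1 : (0:ℝ) < m := by exact_mod_cast hm.1
    have h2 : (m:ℝ) < n := by exact_mod_cast hm.2
    have : 0 < Real.log ((n:ℝ)/m) := Real.log_pos ((one_lt_div h1).2 h2)
    positivity
  have hbound : ∑ n ∈ Finset.Icc 1 N, ∑ m ∈ Finset.Ico 1 n,
      1 / (Real.sqrt ((m : ℝ) * n) * Real.log ((n : ℝ) / m))
      ≤ N * (6 + 2 * Real.log T) := by
    calc ∑ n ∈ Finset.Icc 1 N, ∑ m ∈ Finset.Ico 1 n,
        1 / (Real.sqrt ((m : ℝ) * n) * Real.log ((n : ℝ) / m))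
        ≤ ∑ n ∈ Finset.Icc 1 N, (6 + 2 * Real.log T) := by
          apply Finset.sum_le_sum
          intro n hn
          simp only [Finset.mem_Icc] at hn
          refine (innerSum n hn.1).trans ?_
          have hnT : (n:ℝ) ≤ T := le_trans (by exact_mod_cast hn.2) hNT
          have h0n : (0:ℝ) < n := by exact_mod_cast hn.1
          have := Real.log_le_log h0n hnT
          linarith
      _ = N * (6 + 2 * Real.log T) := by
          rw [Finset.sum_const, Nat.card_Icc]
          simp [nsmul_eq_mul]; ring
  have hfinal : (N:ℝ) * (6 + 2 * Real.log T) ≤ 8 * (T * Real.log T) := by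
    have h6 : (6:ℝ) + 2 * Real.log T ≤ 8 * Real.log T := by linarith
    have hN0 : (0:ℝ) ≤ N := Nat.cast_nonneg N
    calc (N:ℝ) * (6 + 2 * Real.log T) ≤ T * (8 * Real.log T) := by
          apply mul_le_mul hNT h6 (by positivity) hT0.le
      _ = 8 * (T * Real.log T) := by ring
  rw [Real.norm_eq_abs, Real.norm_eq_abs, abs_of_nonneg hnonneg,
    abs_of_nonneg (by positivity)]
  linarith
end

section
/- As T → ∞, ∑_{1 ≤ m < n ≤ T} d(m)·d(n)/(√(mn) · log(n/m)) = O(T (log T)³). -/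
open Filter Asymptotics Finset

lemma sqrt_sum_le (M : ℕ) : ∑ k ∈ Icc 1 M, (1:ℝ)/Real.sqrt k ≤ 2 * Real.sqrt M := by
  induction M with
  | zero => simp
  | succ M ih =>
    rw [Finset.sum_Icc_succ_top (by omega)]
    have h1 : Real.sqrt (M+1) ≠ 0 := by positivity
    have h2 : (1:ℝ)/Real.sqrt (M+1) ≤ 2*(Real.sqrt (M+1) - Real.sqrt M) := by
      rw [div_le_iff₀ (by positivity)]
      have : Real.sqrt M ≤ Real.sqrt (M+1) := Real.sqrt_le_sqrt (by push_cast; linarith)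
      nlinarith [Real.sq_sqrt (show (0:ℝ) ≤ M by positivity),
        Real.sq_sqrt (show (0:ℝ) ≤ (M:ℝ)+1 by positivity), Real.sqrt_nonneg (M:ℝ)]
    push_cast
    push_cast at ih
    linarith

lemma cube_sum_le (K : ℕ) : ∑ g ∈ Icc 1 K, (1:ℝ)/(g:ℝ)^3 ≤ 2 := by
  have h : ∀ K : ℕ, 1 ≤ K → ∑ g ∈ Icc 1 K, (1:ℝ)/(g:ℝ)^3 ≤ 2 - 1/K := by
    intro K hK
    induction K with
    | zero => omega
    | succ K ih =>
      rcases Nat.eq_or_lt_of_le hK with h|h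
      · simp [← h]; norm_num
      · have hK1 : 1 ≤ K := by omega
        rw [Finset.sum_Icc_succ_top (by omega)]
        have hKpos : (0:ℝ) < K := by exact_mod_cast hK1
        have : (1:ℝ)/((K:ℝ)+1)^3 ≤ 1/K - 1/((K:ℝ)+1) := by
          rw [div_sub_div _ _ (ne_of_gt hKpos) (by positivity)]
          rw [div_le_div_iff₀ (by positivity) (by positivity)]
          ring_nf
          nlinarith
        have := ih hK1
        push_cast
        push_cast at this
        linarith
  rcases Nat.eq_zero_or_pos K with hK|hK
  · simp [hK]
  · have h1 := h K hK
    have h2 : (0:ℝ) < K := by exact_mod_cast hK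
    have : (0:ℝ) < 1/K := by positivity
    linarith

lemma harm_le (M : ℕ) : ∑ k ∈ Icc 1 M, (1:ℝ)/k ≤ Real.log M + 1 := by
  induction M with
  | zero => simp
  | succ M ih =>
    rcases Nat.eq_zero_or_pos M with h|h
    · subst h; simp
    rw [Finset.sum_Icc_succ_top (by omega)]
    have hM : (0:ℝ) < M := by exact_mod_cast h
    have key : (1:ℝ)/((M:ℝ)+1) ≤ Real.log (M+1) - Real.log M := by
      have := Real.log_le_sub_one_of_pos (show (0:ℝ) < (M:ℝ)/((M:ℝ)+1) by positivity)
      rw [Real.log_div (by positivity) (by positivity)] at this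
      have heq : 1 - (M:ℝ)/((M:ℝ)+1) = 1/((M:ℝ)+1) := by field_simp; ring
      linarith
    push_cast
    push_cast at ih
    linarith

lemma reindex_mult (N a : ℕ) (ha : 1 ≤ a) (f : ℕ → ℝ) :
    ∑ n ∈ (Icc 1 N).filter (a ∣ ·), f n = ∑ b ∈ Icc 1 (N/a), f (a*b) := by
  apply Finset.sum_nbij' (i := fun n => n/a) (j := fun b => a*b)
  · intro n hn
    simp only [mem_filter, mem_Icc] at hn
    obtain ⟨⟨h1, h2⟩, c, hc⟩ := hn
    simp only [mem_Icc]
    constructor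
    · subst hc; rw [Nat.mul_div_cancel_left _ (by omega)]; nlinarith
    · exact Nat.div_le_div_right h2
  · intro b hb
    simp only [mem_Icc] at hb
    simp only [mem_filter, mem_Icc]
    refine ⟨⟨by nlinarith, ?_⟩, ⟨b, rfl⟩⟩
    calc a * b ≤ a * (N/a) := by exact Nat.mul_le_mul_left a hb.2
    _ ≤ N := Nat.mul_div_le N a
  · intro n hn
    simp only [mem_filter] at hn
    exact Nat.mul_div_cancel' hn.2 
  · intro b hb
    rw [Nat.mul_div_cancel_left _ (by omega)]
  · intro n hn
    simp only [mem_filter] at hn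
    rw [Nat.mul_div_cancel' hn.2]

lemma divisor_bound (N n : ℕ) (h1 : 1 ≤ n) (h2 : n ≤ N) :
    ((n.divisors.card : ℝ)) ≤ 2 * ∑ a ∈ Icc 1 (Nat.sqrt N), (if a ∣ n then (1:ℝ) else 0) := by
  have key : n.divisors.card ≤ 2 * (n.divisors.filter (fun a => a*a ≤ n)).card := by
    have hsplit : n.divisors.card = (n.divisors.filter (fun a => a*a ≤ n)).card
        + (n.divisors.filter (fun a => ¬ (a*a ≤ n))).card := by
      rw [Finset.card_filter_add_card_filter_not]
    have hinj : (n.divisors.filter (fun a => ¬ (a*a ≤ n))).card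
        ≤ (n.divisors.filter (fun a => a*a ≤ n)).card := by
      apply Finset.card_le_card_of_injOn (fun a => n/a)
      · intro a ha
        simp only [Finset.mem_coe, mem_filter, Nat.mem_divisors] at ha ⊢
        obtain ⟨⟨hd, hn0⟩, hgt⟩ := ha
        obtain ⟨b, hb⟩ := hd
        subst hb
        have hapos : 0 < a := Nat.pos_of_mem_divisors (Nat.mem_divisors.2 ⟨⟨b, rfl⟩, hn0⟩)
        rw [Nat.mul_div_cancel_left _ hapos]
        refine ⟨⟨⟨a, mul_comm a b⟩, hn0⟩, ?_⟩
        nlinarith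
      · intro x hx y hy hxy
        simp only [Finset.coe_filter, Set.mem_setOf_eq, Nat.mem_divisors] at hx hy
        have hx2 := Nat.div_div_self hx.1.1 hx.1.2
        simp only at hxy
        rw [← hx2, hxy, Nat.div_div_self hy.1.1 hy.1.2]
    omega
  have hsub : (n.divisors.filter (fun a => a*a ≤ n)) ⊆ (Icc 1 (Nat.sqrt N)).filter (· ∣ n) := by
    intro a ha
    simp only [mem_filter, Nat.mem_divisors, mem_Icc] at ha ⊢
    refine ⟨⟨?_, ?_⟩, ha.1.1⟩
    · by_contra h; push_neg at h; interval_cases a <;> simp_all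
    · exact Nat.le_sqrt.2 (le_trans ha.2 h2)
  calc ((n.divisors.card : ℝ)) ≤ 2 * ((n.divisors.filter (fun a => a*a ≤ n)).card : ℝ) := by
        exact_mod_cast key
  _ ≤ 2 * (((Icc 1 (Nat.sqrt N)).filter (· ∣ n)).card : ℝ) := by
        have := Finset.card_le_card hsub
        have : ((n.divisors.filter (fun a => a*a ≤ n)).card:ℝ) ≤ (((Icc 1 (Nat.sqrt N)).filter (· ∣ n)).card : ℝ) := by exact_mod_cast this
        linarith
  _ = 2 * ∑ a ∈ Icc 1 (Nat.sqrt N), (if a ∣ n then (1:ℝ) else 0) := by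
        rw [Finset.sum_ite, Finset.sum_const, Finset.sum_const]
        simp

lemma count_cong (N a b r : ℕ) (ha : 1 ≤ a) (hb : 1 ≤ b) (hN : 1 ≤ N) :
    (((Icc 1 N).filter (fun m => a ∣ m ∧ b ∣ m + r)).card : ℝ)
      ≤ if Nat.gcd a b ∣ r then (N:ℝ)/(Nat.lcm a b) + 1 else 0 := by
  set S := (Icc 1 N).filter (fun m => a ∣ m ∧ b ∣ m + r) with hS
  by_cases hg : Nat.gcd a b ∣ r
  · rw [if_pos hg]
    set L := Nat.lcm a b with hL
    have hL1 : 1 ≤ L := Nat.one_le_iff_ne_zero.2 (Nat.lcm_ne_zero (by omega) (by omega))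
    -- all elements of S congruent mod L
    have hcong : ∀ m₁ ∈ S, ∀ m₂ ∈ S, m₁ ≤ m₂ → L ∣ m₂ - m₁ := by
      intro m₁ h₁ m₂ h₂ hle
      simp only [hS, mem_filter, mem_Icc] at h₁ h₂
      have hda : a ∣ m₂ - m₁ := Nat.dvd_sub h₂.2.1 h₁.2.1
      have hdb : b ∣ m₂ - m₁ := by
        have := Nat.dvd_sub h₂.2.2 h₁.2.2
        simpa [Nat.add_sub_add_right] using this
      exact Nat.lcm_dvd hda hdb
    have hcard : S.card ≤ (N-1)/L + 1 := by
      have hle : S.card ≤ (Finset.range ((N-1)/L + 1)).card := by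
        apply Finset.card_le_card_of_injOn (fun m => (m-1)/L)
        · intro m hm
          simp only [hS, Finset.mem_coe, mem_filter, mem_Icc] at hm
          simp only [Finset.mem_coe, Finset.mem_range]
          have : (m-1)/L ≤ (N-1)/L := Nat.div_le_div_right (by omega)
          omega
        · intro x hx y hy hxy
          simp only at hxy
          by_contra hne
          rcases Nat.lt_or_ge x y with h|h
          · have hd := hcong x hx y hy (le_of_lt h)
            have hx1 : 1 ≤ x := (mem_Icc.1 (Finset.mem_of_mem_filter x (hS ▸ hx))).1
            have : y - x ≥ L := Nat.le_of_dvd (Nat.sub_pos_of_lt h) hd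
            have : (y-1)/L ≥ (x-1)/L + 1 := by
              have : (x-1) + L ≤ y - 1 := by omega
              calc (x-1)/L + 1 = ((x-1) + L)/L := by rw [Nat.add_div_right _ (by omega)]
              _ ≤ (y-1)/L := Nat.div_le_div_right this
            omega
          · have hne' : y < x := by omega
            have hd := hcong y hy x hx (le_of_lt hne')
            have hy1 : 1 ≤ y := (mem_Icc.1 (Finset.mem_of_mem_filter y (hS ▸ hy))).1
            have : x - y ≥ L := Nat.le_of_dvd (Nat.sub_pos_of_lt hne') hd
            have : (x-1)/L ≥ (y-1)/L + 1 := by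
              have : (y-1) + L ≤ x - 1 := by omega
              calc (y-1)/L + 1 = ((y-1) + L)/L := by rw [Nat.add_div_right _ (by omega)]
              _ ≤ (x-1)/L := Nat.div_le_div_right this
            omega
      simpa using hle
    calc (S.card : ℝ) ≤ (((N-1)/L + 1 : ℕ) : ℝ) := by exact_mod_cast hcard
    _ ≤ (N:ℝ)/L + 1 := by
        push_cast
        have h1 : (((N-1)/L : ℕ) : ℝ) ≤ ((N-1 : ℕ):ℝ)/(L:ℝ) := by
          apply Nat.cast_div_le
        have h2 : ((N-1:ℕ):ℝ) ≤ (N:ℝ) := by push_cast [Nat.cast_sub hN]; simp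
        have hLpos : (0:ℝ) < L := by exact_mod_cast hL1
        have : ((N-1:ℕ):ℝ)/(L:ℝ) ≤ (N:ℝ)/L := by gcongr
        linarith
  · rw [if_neg hg]
    have : S = ∅ := by
      rw [Finset.eq_empty_iff_forall_notMem]
      intro m hm
      simp only [hS, mem_filter, mem_Icc] at hm
      apply hg
      have h1 : Nat.gcd a b ∣ m := (Nat.gcd_dvd_left a b).trans hm.2.1
      have h2 : Nat.gcd a b ∣ m + r := (Nat.gcd_dvd_right a b).trans hm.2.2
      exact (Nat.dvd_add_right h1).mp h2
    simp [this]

lemma stepA (N : ℕ) (hN : 1 ≤ N) :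
    ∑ n ∈ Icc 1 N, (n.divisors.card : ℝ)/Real.sqrt n
      ≤ 4*Real.sqrt N*(Real.log N + 1) := by
  set K := Nat.sqrt N with hK
  have hK1 : 1 ≤ K := by
    rw [hK]; exact Nat.one_le_iff_ne_zero.2 (by simpa [Nat.sqrt_eq_zero] using by omega)
  have h1 : ∑ n ∈ Icc 1 N, (n.divisors.card:ℝ)/Real.sqrt n
      ≤ 2 * ∑ a ∈ Icc 1 K, ∑ n ∈ (Icc 1 N).filter (a ∣ ·), 1/Real.sqrt n := by
    have : ∀ n ∈ Icc 1 N, (n.divisors.card:ℝ)/Real.sqrt n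
        ≤ ∑ a ∈ Icc 1 K, (if a ∣ n then (1:ℝ) else 0) * (2/Real.sqrt n) := by
      intro n hn
      simp only [mem_Icc] at hn
      rw [← Finset.sum_mul]
      rw [div_le_iff₀ (Real.sqrt_pos.2 (show (0:ℝ) < n by exact_mod_cast hn.1))]
      have hd := divisor_bound N n hn.1 hn.2
      calc (n.divisors.card:ℝ) ≤ 2*∑ a ∈ Icc 1 K, (if a ∣ n then (1:ℝ) else 0) := hd
      _ = (∑ a ∈ Icc 1 K, (if a ∣ n then (1:ℝ) else 0)) * (2/Real.sqrt n) * Real.sqrt n := by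
          field_simp [Real.sqrt_ne_zero'.2 (show (0:ℝ) < n by exact_mod_cast hn.1)]
    calc ∑ n ∈ Icc 1 N, (n.divisors.card:ℝ)/Real.sqrt n
        ≤ ∑ n ∈ Icc 1 N, ∑ a ∈ Icc 1 K, (if a ∣ n then (1:ℝ) else 0) * (2/Real.sqrt n) :=
          Finset.sum_le_sum this
    _ = ∑ a ∈ Icc 1 K, ∑ n ∈ Icc 1 N, (if a ∣ n then (1:ℝ) else 0) * (2/Real.sqrt n) :=
          Finset.sum_comm
    _ = 2 * ∑ a ∈ Icc 1 K, ∑ n ∈ (Icc 1 N).filter (a ∣ ·), 1/Real.sqrt n := by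
          rw [Finset.mul_sum]
          apply Finset.sum_congr rfl
          intro a _
          rw [Finset.sum_filter, Finset.mul_sum]
          apply Finset.sum_congr rfl
          intro n _
          by_cases h : a ∣ n <;> simp [h] <;> ring
  have h2 : ∀ a ∈ Icc 1 K, ∑ n ∈ (Icc 1 N).filter (a ∣ ·), 1/Real.sqrt n
      ≤ 2*Real.sqrt N/a := by
    intro a ha
    simp only [mem_Icc] at ha
    rw [reindex_mult N a ha.1]
    have hstep : ∀ b ∈ Icc 1 (N/a), (1:ℝ)/Real.sqrt ((a*b : ℕ):ℝ) = (1/Real.sqrt a)*(1/Real.sqrt b) := by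
      intro b _
      push_cast
      rw [Real.sqrt_mul (by positivity)]
      ring
    rw [Finset.sum_congr rfl hstep, ← Finset.mul_sum]
    have hsum := sqrt_sum_le (N/a)
    have hsq : Real.sqrt ((N/a : ℕ):ℝ) ≤ Real.sqrt N / Real.sqrt a := by
      rw [← Real.sqrt_div (by positivity)]
      apply Real.sqrt_le_sqrt
      exact Nat.cast_div_le
    have hapos : (0:ℝ) < Real.sqrt a := Real.sqrt_pos.2 (by exact_mod_cast ha.1)
    calc (1/Real.sqrt a) * ∑ b ∈ Icc 1 (N/a), (1:ℝ)/Real.sqrt b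
        ≤ (1/Real.sqrt a) * (2 * (Real.sqrt N / Real.sqrt a)) := by
          apply mul_le_mul_of_nonneg_left _ (by positivity)
          calc ∑ b ∈ Icc 1 (N/a), (1:ℝ)/Real.sqrt b ≤ 2 * Real.sqrt ((N/a:ℕ):ℝ) := hsum
          _ ≤ 2 * (Real.sqrt N / Real.sqrt a) := by linarith
    _ = 2*Real.sqrt N/(Real.sqrt a * Real.sqrt a) := by ring
    _ = 2*Real.sqrt N/a := by rw [Real.mul_self_sqrt (by positivity)]
  calc ∑ n ∈ Icc 1 N, (n.divisors.card:ℝ)/Real.sqrt n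
      ≤ 2 * ∑ a ∈ Icc 1 K, ∑ n ∈ (Icc 1 N).filter (a ∣ ·), 1/Real.sqrt n := h1
  _ ≤ 2 * ∑ a ∈ Icc 1 K, 2*Real.sqrt N/a := by
      apply mul_le_mul_of_nonneg_left (Finset.sum_le_sum h2) (by norm_num)
  _ = 4*Real.sqrt N * ∑ a ∈ Icc 1 K, 1/(a:ℝ) := by
      rw [Finset.mul_sum, Finset.mul_sum]
      apply Finset.sum_congr rfl; intro a _; ring
  _ ≤ 4*Real.sqrt N * (Real.log K + 1) := by
      apply mul_le_mul_of_nonneg_left (harm_le K) (by positivity)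
  _ ≤ 4*Real.sqrt N*(Real.log N + 1) := by
      have : Real.log K ≤ Real.log N := by
        apply Real.log_le_log (by positivity) (by exact_mod_cast Nat.sqrt_le_self N)
      nlinarith [Real.sqrt_nonneg (N:ℝ)]

lemma card_mult (K g : ℕ) (hg : 1 ≤ g) :
    ((((Icc 1 K).filter (g ∣ ·)).card : ℝ)) = ((K/g : ℕ) : ℝ) := by
  have := reindex_mult K g hg (fun _ => (1:ℝ))
  simpa using this

lemma Ldiv (N g : ℕ) (hg : 1 ≤ g) :
    ∑ r ∈ (Icc 1 N).filter (g ∣ ·), (1:ℝ)/r ≤ (1/g)*(Real.log N + 1) := by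
  rw [reindex_mult N g hg]
  have h1 : ∀ k ∈ Icc 1 (N/g), (1:ℝ)/((g*k : ℕ):ℝ) = (1/g)*(1/k) := by
    intro k hk
    push_cast
    simp [one_div, mul_inv, mul_comm]
  rw [Finset.sum_congr rfl h1, ← Finset.mul_sum]
  have h2 : ∑ k ∈ Icc 1 (N/g), (1:ℝ)/k ≤ Real.log N + 1 := by
    calc ∑ k ∈ Icc 1 (N/g), (1:ℝ)/k ≤ Real.log (N/g : ℕ) + 1 := harm_le _
    _ ≤ Real.log N + 1 := by
        rcases Nat.eq_zero_or_pos (N/g) with h|h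
        · simp [h]
          exact Real.log_natCast_nonneg N
        · have : ((N/g : ℕ):ℝ) ≤ (N:ℝ) := by exact_mod_cast Nat.div_le_self N g
          have := Real.log_le_log (by exact_mod_cast h) this
          linarith
  exact mul_le_mul_of_nonneg_left h2 (by positivity)

lemma gcd_sum (K : ℕ) :
    ∑ a ∈ Icc 1 K, ∑ b ∈ Icc 1 K, (1:ℝ)/(Nat.gcd a b) ≤ 2*(K:ℝ)^2 := by
  have hpt : ∀ a ∈ Icc 1 K, ∀ b ∈ Icc 1 K, (1:ℝ)/(Nat.gcd a b)
      ≤ ∑ g ∈ Icc 1 K, (if g ∣ a then (1:ℝ) else 0)*(if g ∣ b then (1:ℝ) else 0)*(1/g) := by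
    intro a ha b hb
    simp only [mem_Icc] at ha hb
    set g0 := Nat.gcd a b with hg0
    have hg0mem : g0 ∈ Icc 1 K := by
      simp only [mem_Icc]
      constructor
      · exact Nat.one_le_iff_ne_zero.2 (Nat.gcd_ne_zero_left (by omega))
      · exact le_trans (Nat.le_of_dvd (by omega) (Nat.gcd_dvd_left a b)) ha.2
    have := Finset.single_le_sum (f := fun g => (if g ∣ a then (1:ℝ) else 0)*(if g ∣ b then (1:ℝ) else 0)*(1/g))
      (fun g _ => by positivity) hg0mem
    simpa [hg0, Nat.gcd_dvd_left, Nat.gcd_dvd_right] using this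
  calc ∑ a ∈ Icc 1 K, ∑ b ∈ Icc 1 K, (1:ℝ)/(Nat.gcd a b)
      ≤ ∑ a ∈ Icc 1 K, ∑ b ∈ Icc 1 K, ∑ g ∈ Icc 1 K,
          (if g ∣ a then (1:ℝ) else 0)*(if g ∣ b then (1:ℝ) else 0)*(1/g) := by
        apply Finset.sum_le_sum; intro a ha
        exact Finset.sum_le_sum (hpt a ha)
  _ = ∑ g ∈ Icc 1 K, ∑ a ∈ Icc 1 K, ∑ b ∈ Icc 1 K,
          (if g ∣ a then (1:ℝ) else 0)*(if g ∣ b then (1:ℝ) else 0)*(1/g) := by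
        rw [show (∑ a ∈ Icc 1 K, ∑ b ∈ Icc 1 K, ∑ g ∈ Icc 1 K,
          (if g ∣ a then (1:ℝ) else 0)*(if g ∣ b then (1:ℝ) else 0)*(1/g))
          = ∑ a ∈ Icc 1 K, ∑ g ∈ Icc 1 K, ∑ b ∈ Icc 1 K,
          (if g ∣ a then (1:ℝ) else 0)*(if g ∣ b then (1:ℝ) else 0)*(1/g) from
          Finset.sum_congr rfl (fun a _ => Finset.sum_comm)]
        exact Finset.sum_comm
  _ ≤ 2*(K:ℝ)^2 := by
      have key : ∀ g ∈ Icc 1 K, ∑ a ∈ Icc 1 K, ∑ b ∈ Icc 1 K,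
          (if g ∣ a then (1:ℝ) else 0)*(if g ∣ b then (1:ℝ) else 0)*(1/g)
          ≤ (K:ℝ)^2 * (1/(g:ℝ)^3) := by
        intro g hg
        simp only [mem_Icc] at hg
        have hfact : ∑ a ∈ Icc 1 K, ∑ b ∈ Icc 1 K,
            (if g ∣ a then (1:ℝ) else 0)*(if g ∣ b then (1:ℝ) else 0)*(1/g)
            = (∑ a ∈ Icc 1 K, if g ∣ a then (1:ℝ) else 0)
              * (∑ b ∈ Icc 1 K, if g ∣ b then (1:ℝ) else 0) * (1/g) := by
          symm
          rw [Finset.sum_mul_sum, Finset.sum_mul]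
          apply Finset.sum_congr rfl; intro a _
          rw [Finset.sum_mul]
        rw [hfact]
        have hcard : (∑ a ∈ Icc 1 K, if g ∣ a then (1:ℝ) else 0) = ((K/g : ℕ):ℝ) := by
          rw [← Finset.sum_filter]
          simpa using card_mult K g hg.1
        have hb : ((K/g : ℕ):ℝ) ≤ (K:ℝ)/g := Nat.cast_div_le
        rw [hcard]
        have h0 : (0:ℝ) ≤ ((K/g:ℕ):ℝ) := by positivity
        have hgpos : (0:ℝ) < g := by exact_mod_cast hg.1
        calc ((K/g : ℕ):ℝ) * ((K/g : ℕ):ℝ) * (1/g) ≤ ((K:ℝ)/g) * ((K:ℝ)/g) * (1/g) := by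
              apply mul_le_mul_of_nonneg_right _ (by positivity)
              apply mul_le_mul hb hb h0 (by positivity)
        _ = (K:ℝ)^2 * (1/(g:ℝ)^3) := by field_simp
      calc ∑ g ∈ Icc 1 K, ∑ a ∈ Icc 1 K, ∑ b ∈ Icc 1 K,
          (if g ∣ a then (1:ℝ) else 0)*(if g ∣ b then (1:ℝ) else 0)*(1/g)
          ≤ ∑ g ∈ Icc 1 K, (K:ℝ)^2 * (1/(g:ℝ)^3) := Finset.sum_le_sum key
      _ = (K:ℝ)^2 * ∑ g ∈ Icc 1 K, (1:ℝ)/(g:ℝ)^3 := by rw [← Finset.mul_sum]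
      _ ≤ (K:ℝ)^2 * 2 := by
          apply mul_le_mul_of_nonneg_left (cube_sum_le K) (by positivity)
      _ = 2*(K:ℝ)^2 := by ring

lemma stepB (N : ℕ) (hN : 1 ≤ N) :
    ∑ n ∈ Icc 1 N, ∑ m ∈ Ico 1 n, (m.divisors.card:ℝ)*(n.divisors.card:ℝ)/((n:ℝ)-m)
      ≤ 12*N*(Real.log N + 1)^3 := by
  set K := Nat.sqrt N with hK
  -- reindex by r = n - m
  have hreindex : ∑ n ∈ Icc 1 N, ∑ m ∈ Ico 1 n, (m.divisors.card:ℝ)*(n.divisors.card:ℝ)/((n:ℝ)-m)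
      = ∑ r ∈ Icc 1 N, ∑ m ∈ Icc 1 (N-r),
          (m.divisors.card:ℝ)*((m+r).divisors.card:ℝ)/(r:ℝ) := by
    rw [Finset.sum_sigma', Finset.sum_sigma']
    apply Finset.sum_nbij' (i := fun p => ⟨p.1 - p.2, p.2⟩) (j := fun p => ⟨p.2 + p.1, p.2⟩)
    · rintro ⟨n, m⟩ hp
      simp only [Finset.mem_sigma, mem_Icc, mem_Ico] at hp ⊢
      omega
    · rintro ⟨r, m⟩ hp
      simp only [Finset.mem_sigma, mem_Icc, mem_Ico] at hp ⊢
      omega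
    · rintro ⟨n, m⟩ hp
      simp only [Finset.mem_sigma, mem_Icc, mem_Ico] at hp
      simp only [Sigma.mk.inj_iff]
      constructor
      · omega
      · exact HEq.rfl
    · rintro ⟨r, m⟩ hp
      simp only [Finset.mem_sigma, mem_Icc, mem_Ico] at hp
      simp only [Sigma.mk.inj_iff]
      constructor
      · omega
      · exact HEq.rfl
    · rintro ⟨n, m⟩ hp
      simp only [Finset.mem_sigma, mem_Icc, mem_Ico] at hp
      have : ((n - m : ℕ) : ℝ) = (n:ℝ) - m := by
        push_cast [Nat.cast_sub (le_of_lt hp.2.2)]; ring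
      have h1 : m + (n - m) = n := by omega
      simp only
      rw [h1, this]
  rw [hreindex]
  -- bound inner sum for fixed r
  have hinner : ∀ r ∈ Icc 1 N, ∑ m ∈ Icc 1 (N-r),
      (m.divisors.card:ℝ)*((m+r).divisors.card:ℝ)/(r:ℝ)
      ≤ (1/r) * ∑ a ∈ Icc 1 K, ∑ b ∈ Icc 1 K,
          (if Nat.gcd a b ∣ r then 4*((N:ℝ)/(Nat.lcm a b) + 1) else 0) := by
    intro r hr
    simp only [mem_Icc] at hr
    have h1 : ∀ m ∈ Icc 1 (N-r), (m.divisors.card:ℝ)*((m+r).divisors.card:ℝ)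
        ≤ 4 * ∑ a ∈ Icc 1 K, ∑ b ∈ Icc 1 K,
            (if a ∣ m then (1:ℝ) else 0)*(if b ∣ m+r then (1:ℝ) else 0) := by
      intro m hm
      simp only [mem_Icc] at hm
      have hm1 := divisor_bound N m hm.1 (by omega)
      have hm2 := divisor_bound N (m+r) (by omega) (by omega)
      calc (m.divisors.card:ℝ)*((m+r).divisors.card:ℝ)
          ≤ (2 * ∑ a ∈ Icc 1 K, (if a ∣ m then (1:ℝ) else 0))
            * (2 * ∑ b ∈ Icc 1 K, (if b ∣ m+r then (1:ℝ) else 0)) := by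
            apply mul_le_mul hm1 hm2 (by positivity) (by positivity)
      _ = 4 * ((∑ a ∈ Icc 1 K, (if a ∣ m then (1:ℝ) else 0))
            * (∑ b ∈ Icc 1 K, (if b ∣ m+r then (1:ℝ) else 0))) := by ring
      _ = 4 * ∑ a ∈ Icc 1 K, ∑ b ∈ Icc 1 K,
            (if a ∣ m then (1:ℝ) else 0)*(if b ∣ m+r then (1:ℝ) else 0) := by
            rw [Finset.sum_mul_sum]
    have h2 : ∑ m ∈ Icc 1 (N-r), ∑ a ∈ Icc 1 K, ∑ b ∈ Icc 1 K,
        (if a ∣ m then (1:ℝ) else 0)*(if b ∣ m+r then (1:ℝ) else 0)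
        ≤ ∑ a ∈ Icc 1 K, ∑ b ∈ Icc 1 K, (if Nat.gcd a b ∣ r then (N:ℝ)/(Nat.lcm a b) + 1 else 0) := by
      have hswap : ∑ m ∈ Icc 1 (N-r), ∑ a ∈ Icc 1 K, ∑ b ∈ Icc 1 K,
          (if a ∣ m then (1:ℝ) else 0)*(if b ∣ m+r then (1:ℝ) else 0)
          = ∑ a ∈ Icc 1 K, ∑ b ∈ Icc 1 K, ∑ m ∈ Icc 1 (N-r),
          (if a ∣ m then (1:ℝ) else 0)*(if b ∣ m+r then (1:ℝ) else 0) := by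
        rw [Finset.sum_comm]
        apply Finset.sum_congr rfl; intro a _
        exact Finset.sum_comm
      rw [hswap]
      apply Finset.sum_le_sum; intro a ha
      apply Finset.sum_le_sum; intro b hb
      simp only [mem_Icc] at ha hb
      have hsub : ∑ m ∈ Icc 1 (N-r),
          (if a ∣ m then (1:ℝ) else 0)*(if b ∣ m+r then (1:ℝ) else 0)
          ≤ ∑ m ∈ Icc 1 N, (if a ∣ m then (1:ℝ) else 0)*(if b ∣ m+r then (1:ℝ) else 0) := by
        apply Finset.sum_le_sum_of_subset_of_nonneg
        · apply Finset.Icc_subset_Icc_right; omega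
        · intro m _ _; positivity
      have hcount : ∑ m ∈ Icc 1 N, (if a ∣ m then (1:ℝ) else 0)*(if b ∣ m+r then (1:ℝ) else 0)
          = (((Icc 1 N).filter (fun m => a ∣ m ∧ b ∣ m + r)).card : ℝ) := by
        rw [Finset.card_filter]
        push_cast
        apply Finset.sum_congr rfl; intro m _
        by_cases h1 : a ∣ m <;> by_cases h2 : b ∣ m + r <;> simp [h1, h2]
      calc ∑ m ∈ Icc 1 (N-r), (if a ∣ m then (1:ℝ) else 0)*(if b ∣ m+r then (1:ℝ) else 0)
          ≤ (((Icc 1 N).filter (fun m => a ∣ m ∧ b ∣ m + r)).card : ℝ) := by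
            rw [← hcount]; exact hsub
      _ ≤ if Nat.gcd a b ∣ r then (N:ℝ)/(Nat.lcm a b) + 1 else 0 :=
            count_cong N a b r ha.1 hb.1 hN
    have hrpos : (0:ℝ) < r := by exact_mod_cast hr.1
    calc ∑ m ∈ Icc 1 (N-r), (m.divisors.card:ℝ)*((m+r).divisors.card:ℝ)/(r:ℝ)
        = (1/r) * ∑ m ∈ Icc 1 (N-r), (m.divisors.card:ℝ)*((m+r).divisors.card:ℝ) := by
          rw [Finset.mul_sum]
          apply Finset.sum_congr rfl; intro m _; ring
    _ ≤ (1/r) * (4 * (∑ a ∈ Icc 1 K, ∑ b ∈ Icc 1 K, (if Nat.gcd a b ∣ r then (N:ℝ)/(Nat.lcm a b) + 1 else 0))) := by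
          apply mul_le_mul_of_nonneg_left _ (by positivity)
          calc ∑ m ∈ Icc 1 (N-r), (m.divisors.card:ℝ)*((m+r).divisors.card:ℝ)
              ≤ ∑ m ∈ Icc 1 (N-r), 4 * ∑ a ∈ Icc 1 K, ∑ b ∈ Icc 1 K,
                (if a ∣ m then (1:ℝ) else 0)*(if b ∣ m+r then (1:ℝ) else 0) :=
                Finset.sum_le_sum h1
          _ = 4 * ∑ m ∈ Icc 1 (N-r), ∑ a ∈ Icc 1 K, ∑ b ∈ Icc 1 K,
                (if a ∣ m then (1:ℝ) else 0)*(if b ∣ m+r then (1:ℝ) else 0) := by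
                rw [Finset.mul_sum]
          _ ≤ 4 * ∑ a ∈ Icc 1 K, ∑ b ∈ Icc 1 K, (if Nat.gcd a b ∣ r then (N:ℝ)/(Nat.lcm a b) + 1 else 0) := by
                apply mul_le_mul_of_nonneg_left h2 (by norm_num)
    _ = (1/r) * ∑ a ∈ Icc 1 K, ∑ b ∈ Icc 1 K,
          (if Nat.gcd a b ∣ r then 4*((N:ℝ)/(Nat.lcm a b) + 1) else 0) := by
          congr 1
          rw [Finset.mul_sum]
          apply Finset.sum_congr rfl; intro a _
          rw [Finset.mul_sum]
          apply Finset.sum_congr rfl; intro b _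
          by_cases h : Nat.gcd a b ∣ r <;> simp [h]
  have hK2 : (K:ℝ)^2 ≤ N := by exact_mod_cast Nat.sqrt_le' N
  have hlogN : (0:ℝ) ≤ Real.log N := Real.log_natCast_nonneg N
  have hKlog : Real.log K ≤ Real.log N := by
    rcases Nat.eq_zero_or_pos K with h|h
    · simp [h]; exact hlogN
    · exact Real.log_le_log (by exact_mod_cast h) (by exact_mod_cast Nat.sqrt_le_self N)
  calc ∑ r ∈ Icc 1 N, ∑ m ∈ Icc 1 (N-r), (m.divisors.card:ℝ)*((m+r).divisors.card:ℝ)/(r:ℝ)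
      ≤ ∑ r ∈ Icc 1 N, (1/r) * ∑ a ∈ Icc 1 K, ∑ b ∈ Icc 1 K,
          (if Nat.gcd a b ∣ r then 4*((N:ℝ)/(Nat.lcm a b) + 1) else 0) :=
        Finset.sum_le_sum hinner
  _ = ∑ a ∈ Icc 1 K, ∑ b ∈ Icc 1 K, ∑ r ∈ Icc 1 N,
        (if Nat.gcd a b ∣ r then (4*((N:ℝ)/(Nat.lcm a b) + 1))*(1/r) else 0) := by
      rw [show ∑ r ∈ Icc 1 N, (1/(r:ℝ)) * ∑ a ∈ Icc 1 K, ∑ b ∈ Icc 1 K,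
          (if Nat.gcd a b ∣ r then 4*((N:ℝ)/(Nat.lcm a b) + 1) else 0)
          = ∑ r ∈ Icc 1 N, ∑ a ∈ Icc 1 K, ∑ b ∈ Icc 1 K,
          (if Nat.gcd a b ∣ r then (4*((N:ℝ)/(Nat.lcm a b) + 1))*(1/r) else 0) from
        Finset.sum_congr rfl (fun r _ => by
          rw [Finset.mul_sum]
          refine Finset.sum_congr rfl (fun a _ => ?_)
          rw [Finset.mul_sum]
          refine Finset.sum_congr rfl (fun b _ => ?_)
          by_cases h : Nat.gcd a b ∣ r <;> simp [h] <;> ring)]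
      rw [Finset.sum_comm]
      refine Finset.sum_congr rfl (fun a _ => Finset.sum_comm)
  _ ≤ ∑ a ∈ Icc 1 K, ∑ b ∈ Icc 1 K,
        4*((N:ℝ)/((a:ℝ)*b) + 1/(Nat.gcd a b))*(Real.log N + 1) := by
      apply Finset.sum_le_sum; intro a ha
      apply Finset.sum_le_sum; intro b hb
      simp only [mem_Icc] at ha hb
      have hg1 : 1 ≤ Nat.gcd a b := Nat.one_le_iff_ne_zero.2 (Nat.gcd_ne_zero_left (by omega))
      have hL1 : 1 ≤ Nat.lcm a b := Nat.one_le_iff_ne_zero.2 (Nat.lcm_ne_zero (by omega) (by omega))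
      have hC : (0:ℝ) ≤ 4*((N:ℝ)/(Nat.lcm a b) + 1) := by positivity
      calc ∑ r ∈ Icc 1 N, (if Nat.gcd a b ∣ r then (4*((N:ℝ)/(Nat.lcm a b) + 1))*(1/r) else 0)
          = (4*((N:ℝ)/(Nat.lcm a b) + 1)) * ∑ r ∈ (Icc 1 N).filter (Nat.gcd a b ∣ ·), (1:ℝ)/r := by
            rw [Finset.mul_sum, Finset.sum_filter]
      _ ≤ (4*((N:ℝ)/(Nat.lcm a b) + 1)) * ((1/(Nat.gcd a b))*(Real.log N + 1)) :=
            mul_le_mul_of_nonneg_left (Ldiv N (Nat.gcd a b) hg1) hC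
      _ = 4*((N:ℝ)/(Nat.lcm a b)*(1/(Nat.gcd a b)) + 1/(Nat.gcd a b))*(Real.log N + 1) := by
            ring
      _ = 4*((N:ℝ)/((a:ℝ)*b) + 1/(Nat.gcd a b))*(Real.log N + 1) := by
            have hab : ((Nat.lcm a b : ℕ):ℝ) * ((Nat.gcd a b : ℕ):ℝ) = (a:ℝ)*b := by
              rw [← Nat.cast_mul, mul_comm, Nat.gcd_mul_lcm]
              push_cast; ring
            congr 2
            rw [div_mul_div_comm, mul_one, hab]
  _ = (∑ a ∈ Icc 1 K, ∑ b ∈ Icc 1 K, 4*(Real.log N+1)*(N:ℝ)*((1:ℝ)/a*(1/b)))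
      + (∑ a ∈ Icc 1 K, ∑ b ∈ Icc 1 K, 4*(Real.log N+1)*((1:ℝ)/(Nat.gcd a b))) := by
      rw [← Finset.sum_add_distrib]
      refine Finset.sum_congr rfl (fun a _ => ?_)
      rw [← Finset.sum_add_distrib]
      refine Finset.sum_congr rfl (fun b _ => ?_)
      have hab : (N:ℝ)/((a:ℝ)*b) = (N:ℝ)*((1:ℝ)/a*(1/b)) := by
        rw [one_div, one_div, ← mul_inv, ← div_eq_mul_inv]
      rw [hab]; ring
  _ = 4*(Real.log N+1)*(N:ℝ)*((∑ a ∈ Icc 1 K, (1:ℝ)/a)*(∑ b ∈ Icc 1 K, (1:ℝ)/b))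
      + 4*(Real.log N+1)*(∑ a ∈ Icc 1 K, ∑ b ∈ Icc 1 K, (1:ℝ)/(Nat.gcd a b)) := by
      congr 1
      · rw [Finset.sum_mul_sum, Finset.mul_sum]
        refine Finset.sum_congr rfl (fun a _ => ?_)
        rw [Finset.mul_sum]
      · rw [Finset.mul_sum]
        refine Finset.sum_congr rfl (fun a _ => ?_)
        rw [Finset.mul_sum]
  _ ≤ 4*(Real.log N+1)*(N:ℝ)*((Real.log N + 1)*(Real.log N + 1))
      + 4*(Real.log N+1)*(2*(N:ℝ)) := by
      have hh : ∑ a ∈ Icc 1 K, (1:ℝ)/a ≤ Real.log N + 1 := by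
        calc ∑ a ∈ Icc 1 K, (1:ℝ)/a ≤ Real.log K + 1 := harm_le K
        _ ≤ Real.log N + 1 := by linarith
      have hhnn : (0:ℝ) ≤ ∑ a ∈ Icc 1 K, (1:ℝ)/a := by positivity
      have hgs : ∑ a ∈ Icc 1 K, ∑ b ∈ Icc 1 K, (1:ℝ)/(Nat.gcd a b) ≤ 2*(N:ℝ) := by
        calc ∑ a ∈ Icc 1 K, ∑ b ∈ Icc 1 K, (1:ℝ)/(Nat.gcd a b) ≤ 2*(K:ℝ)^2 := gcd_sum K
        _ ≤ 2*(N:ℝ) := by linarith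
      have hNnn : (0:ℝ) ≤ (N:ℝ) := by positivity
      have hc : (0:ℝ) ≤ 4*(Real.log N+1)*(N:ℝ) := by positivity
      have h1 : (∑ a ∈ Icc 1 K, (1:ℝ)/a)*(∑ b ∈ Icc 1 K, (1:ℝ)/b)
          ≤ (Real.log N + 1)*(Real.log N + 1) :=
        mul_le_mul hh hh hhnn (by linarith)
      have h2 := mul_le_mul_of_nonneg_left h1 hc
      have h3 := mul_le_mul_of_nonneg_left hgs (show (0:ℝ) ≤ 4*(Real.log N+1) by positivity)
      linarith
  _ ≤ 12*N*(Real.log N + 1)^3 := by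
      set X := Real.log N + 1 with hX
      have hX1 : (1:ℝ) ≤ X := by rw [hX]; linarith
      have hNnn : (0:ℝ) ≤ (N:ℝ) := by positivity
      have hXc : X ≤ X^3 := le_self_pow₀ (by linarith) (by norm_num)
      have := mul_le_mul_of_nonneg_left hXc (show (0:ℝ) ≤ 8*(N:ℝ) by positivity)
      nlinarith

lemma aux1 (P s t L l2 : ℝ) (hP : 0 ≤ P) (hs : 0 < s) (ht : 0 < t) (hl2 : 0 < l2)
    (h : l2 ≤ L) : P/(s*t*L) ≤ P/(s*t*l2) := by
  apply div_le_div_of_nonneg_left hP (by positivity)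
  apply mul_le_mul_of_nonneg_left h (by positivity)

lemma aux2 (P s t L : ℝ) (hP : 0 ≤ P) (hs : 0 < s) (ht : 0 < t)
    (ht2s : t ≤ 2*s) (hd : 0 < t^2 - s^2) (hL2 : t^2 - s^2 ≤ L*t^2) (hLpos : 0 < L) :
    P/(s*t*L) ≤ 2*(P/(t^2-s^2)) := by
  have k3 : t^2 - s^2 ≤ 2*s*t*L := by
    have k1 : (t^2 - s^2) * t ≤ 2*s*(t^2-s^2) := by nlinarith
    have k2 : 2*s*(t^2-s^2) ≤ 2*s*(L*t^2) := by nlinarith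
    have : (t^2-s^2)*t ≤ (2*s*t*L)*t := by nlinarith
    exact le_of_mul_le_mul_right this ht
  rw [mul_div_assoc']
  rw [div_le_div_iff₀ (by positivity) hd]
  nlinarith [mul_le_mul_of_nonneg_left k3 hP]

lemma pointwise (m n : ℕ) (hm : 1 ≤ m) (hmn : m < n) :
    (m.divisors.card:ℝ)*(n.divisors.card:ℝ)/(Real.sqrt ((m:ℝ)*n) * Real.log ((n:ℝ)/m))
      ≤ (1/Real.log 2) * ((m.divisors.card:ℝ)/Real.sqrt m * ((n.divisors.card:ℝ)/Real.sqrt n))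
        + 2 * ((m.divisors.card:ℝ)*(n.divisors.card:ℝ)/((n:ℝ)-m)) := by
  have hm1 : (1:ℝ) ≤ m := by exact_mod_cast hm
  have hmn' : (m:ℝ) < n := by exact_mod_cast hmn
  have hspos : 0 < Real.sqrt m := Real.sqrt_pos.2 (by linarith)
  have htpos : 0 < Real.sqrt n := Real.sqrt_pos.2 (by linarith)
  have hs2 : (Real.sqrt m)^2 = m := Real.sq_sqrt (by linarith)
  have ht2 : (Real.sqrt n)^2 = n := Real.sq_sqrt (by linarith)
  have hsqrtmul : Real.sqrt ((m:ℝ)*n) = Real.sqrt m * Real.sqrt n :=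
    Real.sqrt_mul (by linarith) _
  have hPnn : 0 ≤ (m.divisors.card:ℝ)*(n.divisors.card:ℝ) := by positivity
  have hLpos : 0 < Real.log ((n:ℝ)/m) := by
    apply Real.log_pos
    rw [lt_div_iff₀ (by linarith)]; linarith
  have hsecond : 0 ≤ 2 * ((m.divisors.card:ℝ)*(n.divisors.card:ℝ)/((n:ℝ)-m)) := by
    apply mul_nonneg (by norm_num)
    apply div_nonneg hPnn (by linarith)
  have hlog2 : (0:ℝ) < Real.log 2 := Real.log_pos (by norm_num)
  have hfirst : 0 ≤ (1/Real.log 2) * ((m.divisors.card:ℝ)/Real.sqrt m * ((n.divisors.card:ℝ)/Real.sqrt n)) := by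
    positivity
  rw [hsqrtmul]
  by_cases hcase : 2*m ≤ n
  · have h2 : Real.log 2 ≤ Real.log ((n:ℝ)/m) := by
      apply Real.log_le_log (by norm_num)
      rw [le_div_iff₀ (by linarith)]
      have : (2:ℝ)*m ≤ n := by exact_mod_cast hcase
      linarith
    have key := aux1 ((m.divisors.card:ℝ)*(n.divisors.card:ℝ)) (Real.sqrt m) (Real.sqrt n)
      (Real.log ((n:ℝ)/m)) (Real.log 2) hPnn hspos htpos hlog2 h2
    have heq : (m.divisors.card:ℝ)*(n.divisors.card:ℝ)/(Real.sqrt m*Real.sqrt n*Real.log 2)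
        = (1/Real.log 2) * ((m.divisors.card:ℝ)/Real.sqrt m * ((n.divisors.card:ℝ)/Real.sqrt n)) := by
      rw [div_mul_div_comm, div_mul_div_comm, one_mul, mul_comm (Real.log 2)]
    rw [heq] at key
    linarith
  · push_neg at hcase
    have hn2m : (n:ℝ) < 2*m := by exact_mod_cast hcase
    have hlow : ((n:ℝ)-m)/(n:ℝ) ≤ Real.log ((n:ℝ)/m) := by
      have hpos : (0:ℝ) < (m:ℝ)/n := div_pos (by linarith) (by linarith)
      have h1 := Real.log_le_sub_one_of_pos hpos
      rw [Real.log_div (by linarith) (by linarith)] at h1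
      rw [Real.log_div (by linarith) (by linarith)]
      have heq : ((n:ℝ)-m)/n = 1 - (m:ℝ)/n := by
        rw [sub_div, div_self (by linarith : (n:ℝ) ≠ 0)]
      rw [heq]
      linarith
    have ht2s : Real.sqrt n ≤ 2*Real.sqrt m := by
      have h4 : Real.sqrt ((n:ℝ)) ≤ Real.sqrt (4*m) := Real.sqrt_le_sqrt (by linarith)
      rwa [show (4:ℝ)*m = (2:ℝ)^2*m by norm_num, Real.sqrt_mul (by positivity),
        Real.sqrt_sq (by norm_num)] at h4
    have hd : (0:ℝ) < (Real.sqrt n)^2 - (Real.sqrt m)^2 := by rw [hs2, ht2]; linarith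
    have hLt2 : (Real.sqrt n)^2 - (Real.sqrt m)^2
        ≤ Real.log ((n:ℝ)/m)*(Real.sqrt n)^2 := by
      rw [hs2, ht2]
      have := mul_le_mul_of_nonneg_right hlow (show (0:ℝ) ≤ (n:ℝ) by linarith)
      rw [div_mul_cancel₀ _ (by linarith : (n:ℝ) ≠ 0)] at this
      linarith
    have key := aux2 ((m.divisors.card:ℝ)*(n.divisors.card:ℝ)) (Real.sqrt m) (Real.sqrt n)
      (Real.log ((n:ℝ)/m)) hPnn hspos htpos ht2s hd hLt2 hLpos
    rw [hs2, ht2] at key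
    linarith

lemma mainIneq (N : ℕ) (hN : 1 ≤ N) :
    ∑ n ∈ Icc 1 N, ∑ m ∈ Ico 1 n,
      (m.divisors.card:ℝ)*(n.divisors.card:ℝ)/(Real.sqrt ((m:ℝ)*n) * Real.log ((n:ℝ)/m))
      ≤ 48*N*(Real.log N + 1)^3 := by
  have hlog2 : (0:ℝ) < Real.log 2 := Real.log_pos (by norm_num)
  have hlogN : (0:ℝ) ≤ Real.log N := Real.log_natCast_nonneg N
  have step1 : ∑ n ∈ Icc 1 N, ∑ m ∈ Ico 1 n,
      (m.divisors.card:ℝ)*(n.divisors.card:ℝ)/(Real.sqrt ((m:ℝ)*n) * Real.log ((n:ℝ)/m))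
      ≤ ∑ n ∈ Icc 1 N, ∑ m ∈ Ico 1 n,
        ((1/Real.log 2) * ((m.divisors.card:ℝ)/Real.sqrt m * ((n.divisors.card:ℝ)/Real.sqrt n))
          + 2 * ((m.divisors.card:ℝ)*(n.divisors.card:ℝ)/((n:ℝ)-m))) := by
    apply Finset.sum_le_sum; intro n hn
    apply Finset.sum_le_sum; intro m hm
    simp only [mem_Icc, mem_Ico] at hn hm
    exact pointwise m n hm.1 hm.2
  have split : ∑ n ∈ Icc 1 N, ∑ m ∈ Ico 1 n,
      ((1/Real.log 2) * ((m.divisors.card:ℝ)/Real.sqrt m * ((n.divisors.card:ℝ)/Real.sqrt n))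
        + 2 * ((m.divisors.card:ℝ)*(n.divisors.card:ℝ)/((n:ℝ)-m)))
      = (1/Real.log 2) * (∑ n ∈ Icc 1 N, ∑ m ∈ Ico 1 n,
          ((m.divisors.card:ℝ)/Real.sqrt m * ((n.divisors.card:ℝ)/Real.sqrt n)))
        + 2 * (∑ n ∈ Icc 1 N, ∑ m ∈ Ico 1 n,
          ((m.divisors.card:ℝ)*(n.divisors.card:ℝ)/((n:ℝ)-m))) := by
    rw [Finset.mul_sum, Finset.mul_sum, ← Finset.sum_add_distrib]
    refine Finset.sum_congr rfl (fun n _ => ?_)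
    rw [Finset.mul_sum, Finset.mul_sum, ← Finset.sum_add_distrib]
  have hA : ∑ n ∈ Icc 1 N, ∑ m ∈ Ico 1 n,
      ((m.divisors.card:ℝ)/Real.sqrt m * ((n.divisors.card:ℝ)/Real.sqrt n))
      ≤ 16*N*(Real.log N + 1)^2 := by
    have hsub : ∀ n ∈ Icc 1 N, ∑ m ∈ Ico 1 n,
        ((m.divisors.card:ℝ)/Real.sqrt m * ((n.divisors.card:ℝ)/Real.sqrt n))
        ≤ ∑ m ∈ Icc 1 N, ((m.divisors.card:ℝ)/Real.sqrt m * ((n.divisors.card:ℝ)/Real.sqrt n)) := by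
      intro n hn
      simp only [mem_Icc] at hn
      apply Finset.sum_le_sum_of_subset_of_nonneg
      · intro x hx
        simp only [mem_Ico, mem_Icc] at hx ⊢
        omega
      · intro m _ _; positivity
    calc ∑ n ∈ Icc 1 N, ∑ m ∈ Ico 1 n,
        ((m.divisors.card:ℝ)/Real.sqrt m * ((n.divisors.card:ℝ)/Real.sqrt n))
        ≤ ∑ n ∈ Icc 1 N, ∑ m ∈ Icc 1 N,
          ((m.divisors.card:ℝ)/Real.sqrt m * ((n.divisors.card:ℝ)/Real.sqrt n)) :=
          Finset.sum_le_sum hsub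
    _ = (∑ m ∈ Icc 1 N, (m.divisors.card:ℝ)/Real.sqrt m)
        * (∑ n ∈ Icc 1 N, (n.divisors.card:ℝ)/Real.sqrt n) := by
        rw [Finset.sum_mul_sum]
        rw [Finset.sum_comm]
    _ ≤ (4*Real.sqrt N*(Real.log N + 1)) * (4*Real.sqrt N*(Real.log N + 1)) := by
        have h := stepA N hN
        have hnn : (0:ℝ) ≤ ∑ m ∈ Icc 1 N, (m.divisors.card:ℝ)/Real.sqrt m := by
          apply Finset.sum_nonneg; intro m _; positivity
        exact mul_le_mul h h hnn (by positivity)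
    _ = 16*(Real.sqrt N * Real.sqrt N)*(Real.log N + 1)^2 := by ring
    _ = 16*N*(Real.log N + 1)^2 := by
        rw [Real.mul_self_sqrt (by positivity)]
  have hB := stepB N hN
  have hlog2inv : (1:ℝ)/Real.log 2 ≤ 3/2 := by
    rw [div_le_div_iff₀ hlog2 (by norm_num)]
    have := Real.log_two_gt_d9
    linarith
  have hAnn : (0:ℝ) ≤ ∑ n ∈ Icc 1 N, ∑ m ∈ Ico 1 n,
      ((m.divisors.card:ℝ)/Real.sqrt m * ((n.divisors.card:ℝ)/Real.sqrt n)) := by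
    apply Finset.sum_nonneg; intro n _
    apply Finset.sum_nonneg; intro m _; positivity
  have hNnn : (0:ℝ) ≤ (N:ℝ) := by positivity
  have hX1 : (1:ℝ) ≤ Real.log N + 1 := by linarith
  calc ∑ n ∈ Icc 1 N, ∑ m ∈ Ico 1 n,
      (m.divisors.card:ℝ)*(n.divisors.card:ℝ)/(Real.sqrt ((m:ℝ)*n) * Real.log ((n:ℝ)/m))
      ≤ (1/Real.log 2) * (∑ n ∈ Icc 1 N, ∑ m ∈ Ico 1 n,
          ((m.divisors.card:ℝ)/Real.sqrt m * ((n.divisors.card:ℝ)/Real.sqrt n)))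
        + 2 * (∑ n ∈ Icc 1 N, ∑ m ∈ Ico 1 n,
          ((m.divisors.card:ℝ)*(n.divisors.card:ℝ)/((n:ℝ)-m))) := by
        rw [← split]; exact step1
  _ ≤ (3/2) * (16*N*(Real.log N + 1)^2) + 2*(12*N*(Real.log N + 1)^3) := by
      have t1 : (1/Real.log 2) * (∑ n ∈ Icc 1 N, ∑ m ∈ Ico 1 n,
          ((m.divisors.card:ℝ)/Real.sqrt m * ((n.divisors.card:ℝ)/Real.sqrt n)))
          ≤ (3/2) * (16*N*(Real.log N + 1)^2) := by
        apply mul_le_mul hlog2inv hA hAnn (by norm_num)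
      have t2 : 2 * (∑ n ∈ Icc 1 N, ∑ m ∈ Ico 1 n,
          ((m.divisors.card:ℝ)*(n.divisors.card:ℝ)/((n:ℝ)-m)))
          ≤ 2*(12*N*(Real.log N + 1)^3) := by linarith
      linarith
  _ ≤ 48*N*(Real.log N + 1)^3 := by
      have h1 : (Real.log N + 1)^2 ≤ (Real.log N + 1)^3 :=
        pow_le_pow_right₀ hX1 (by norm_num)
      nlinarith

theorem stmt_7 :
    (fun T : ℝ => ∑ n ∈ Finset.Icc 1 ⌊T⌋₊, ∑ m ∈ Finset.Ico 1 n,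
        ((m.divisors.card : ℝ) * (n.divisors.card : ℝ)) /
          (Real.sqrt ((m : ℝ) * n) * Real.log ((n : ℝ) / m)))
      =O[atTop] (fun T : ℝ => T * (Real.log T)^3) := by
  rw [Asymptotics.isBigO_iff]
  use 384
  filter_upwards [Filter.eventually_ge_atTop (3:ℝ)] with T hT
  have hT0 : (0:ℝ) ≤ T := by linarith
  set N := ⌊T⌋₊ with hN
  have hN1 : 1 ≤ N := by
    rw [hN]
    apply Nat.le_floor
    push_cast
    linarith
  have hNle : (N:ℝ) ≤ T := Nat.floor_le hT0
  have hNpos : (0:ℝ) < N := by exact_mod_cast hN1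
  have hlogT1 : 1 ≤ Real.log T := by
    rw [Real.le_log_iff_exp_le (by linarith)]
    calc Real.exp 1 ≤ 2.7182818286 := Real.exp_one_lt_d9.le
    _ ≤ T := by linarith
  have hlogN : Real.log N ≤ Real.log T := Real.log_le_log hNpos hNle
  have hlogNnn : (0:ℝ) ≤ Real.log N := Real.log_natCast_nonneg N
  have hmain := mainIneq N hN1
  have hSnn : 0 ≤ ∑ n ∈ Finset.Icc 1 N, ∑ m ∈ Finset.Ico 1 n,
      ((m.divisors.card : ℝ) * (n.divisors.card : ℝ)) /
        (Real.sqrt ((m : ℝ) * n) * Real.log ((n : ℝ) / m)) := by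
    apply Finset.sum_nonneg; intro n hn
    apply Finset.sum_nonneg; intro m hm
    simp only [mem_Icc, mem_Ico] at hn hm
    have hm1 : (1:ℝ) ≤ m := by exact_mod_cast hm.1
    have hmn : (m:ℝ) < n := by exact_mod_cast hm.2
    apply div_nonneg (by positivity)
    apply mul_nonneg (Real.sqrt_nonneg _)
    apply Real.log_nonneg
    rw [le_div_iff₀ (by linarith)]
    linarith
  simp only [norm_mul, Real.norm_eq_abs]
  rw [abs_of_nonneg hSnn, abs_of_nonneg hT0, abs_of_nonneg (by positivity :
    (0:ℝ) ≤ (Real.log T)^3)]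
  have hbound : 48*(N:ℝ)*(Real.log N + 1)^3 ≤ 384 * (T * Real.log T^3) := by
    have h1 : (Real.log N + 1)^3 ≤ (2*Real.log T)^3 := by
      apply pow_le_pow_left₀ (by linarith)
      linarith
    calc 48*(N:ℝ)*(Real.log N + 1)^3 ≤ 48*T*(2*Real.log T)^3 := by
          apply mul_le_mul _ h1 (by positivity) (by positivity)
          linarith
    _ = 384 * (T * Real.log T^3) := by ring
  calc ∑ n ∈ Finset.Icc 1 N, ∑ m ∈ Finset.Ico 1 n,
      ((m.divisors.card : ℝ) * (n.divisors.card : ℝ)) /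
        (Real.sqrt ((m : ℝ) * n) * Real.log ((n : ℝ) / m))
      ≤ 48*(N:ℝ)*(Real.log N + 1)^3 := hmain
  _ ≤ 384 * (T * Real.log T^3) := hbound
end

section
/- Let m ≠ n be positive integers with m, n ≤ T, let μ, ν ∈ ℝ be fixed, and let T′ ∈ [T, 2T]. Then ∫_{T′}^{2T} (m/n)^{it} (2πm)^{2πiμ/log t} (2πn)^{−2πiν/log t} dt = O(1/|log(m/n)|) as T → ∞, with implied constant depending only on μ and ν. -/
open Real

set_option maxHeartbeats 1000000 in
theorem stmt_18 (μ ν : ℝ) :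
    ∃ C > 0, ∃ T₀ : ℝ, ∀ T ≥ T₀, ∀ m n : ℕ, 0 < m → 0 < n → m ≠ n →
      (m:ℝ) ≤ T → (n:ℝ) ≤ T → ∀ T' : ℝ, T ≤ T' → T' ≤ 2*T →
        ‖∫ t in T'..(2*T),
            Complex.exp (Complex.I * t * Real.log ((m:ℝ)/n)) *
              Complex.exp ((2*π*Complex.I*μ * Real.log (2*π*m)) / (Real.log t : ℂ)) *
              Complex.exp (-(2*π*Complex.I*ν * Real.log (2*π*n)) / (Real.log t : ℂ))‖
          ≤ C / |Real.log ((m:ℝ)/n)| := by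
  have hπ : (3:ℝ) < π := Real.pi_gt_three
  have h2π : (1:ℝ) ≤ 2*π := by nlinarith
  have hlog2π : 0 ≤ Real.log (2*π) := Real.log_nonneg h2π
  set K : ℝ := 2*π*(|μ|+|ν|)*(Real.log (2*π)+1) + 1 with hKdef
  have hK1 : 1 ≤ K := by
    have h0 : 0 ≤ 2*π*(|μ|+|ν|)*(Real.log (2*π)+1) := by
      apply mul_nonneg (mul_nonneg (by positivity) (by positivity))
      linarith
    rw [hKdef]; linarith
  refine ⟨3, by norm_num, max 3 (Real.exp K), ?_⟩
  intro T hT m n hm hn hmn hmT hnT T' hTT' hT'2T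
  have hT3 : (3:ℝ) ≤ T := le_trans (le_max_left _ _) hT
  have hTK : Real.exp K ≤ T := le_trans (le_max_right _ _) hT
  have hT0 : (0:ℝ) < T := by linarith
  have hlogTK : K ≤ Real.log T := by
    rw [← Real.log_exp K]; exact Real.log_le_log (Real.exp_pos K) hTK
  have hlogT1 : 1 ≤ Real.log T := le_trans hK1 hlogTK
  have hm' : (0:ℝ) < m := by exact_mod_cast hm
  have hn' : (0:ℝ) < n := by exact_mod_cast hn
  set l : ℝ := Real.log ((m:ℝ)/n) with hldef
  have hmnpos : 0 < (m:ℝ)/n := div_pos hm' hn'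
  have hmn1 : (m:ℝ)/n ≠ 1 := by
    intro h
    rw [div_eq_one_iff_eq (ne_of_gt hn')] at h
    exact hmn (by exact_mod_cast h)
  have hl : l ≠ 0 := by
    rw [hldef]
    intro h
    rcases Real.log_eq_zero.mp h with h' | h' | h'
    · exact absurd h' (ne_of_gt hmnpos)
    · exact hmn1 h'
    · linarith
  have hlpos : 0 < |l| := abs_pos.mpr hl
  set c : ℝ := 2*π*μ*Real.log (2*π*m) - 2*π*ν*Real.log (2*π*n) with hcdef
  -- bound on |c|
  have hlogbound : ∀ k : ℕ, 0 < k → (k:ℝ) ≤ T →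
      Real.log (2*π*k) ≤ (Real.log (2*π)+1) * Real.log T := by
    intro k hk hkT
    have hk' : (0:ℝ) < k := by exact_mod_cast hk
    have h1 : Real.log (2*π*k) ≤ Real.log (2*π*T) := by
      apply Real.log_le_log (by positivity)
      nlinarith
    have h2 : Real.log (2*π*T) = Real.log (2*π) + Real.log T :=
      Real.log_mul (by positivity) (ne_of_gt hT0)
    nlinarith
  have hc : |c| ≤ Real.log T ^ 2 := by
    have hbm := hlogbound m hm hmT
    have hbn := hlogbound n hn hnT
    have hm1 : (1:ℝ) ≤ m := by exact_mod_cast hm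
    have hn1 : (1:ℝ) ≤ n := by exact_mod_cast hn
    have hlm : 0 ≤ Real.log (2*π*m) := Real.log_nonneg (by nlinarith)
    have hln : 0 ≤ Real.log (2*π*n) := Real.log_nonneg (by nlinarith)
    have h1 : |c| ≤ |2*π*μ*Real.log (2*π*m)| + |2*π*ν*Real.log (2*π*n)| := abs_sub _ _
    have h2 : |2*π*μ*Real.log (2*π*m)| = 2*π * |μ| * Real.log (2*π*m) := by
      rw [abs_mul, abs_mul, abs_of_nonneg hlm, abs_of_nonneg (by positivity : (0:ℝ) ≤ 2*π)]
    have h3 : |2*π*ν*Real.log (2*π*n)| = 2*π * |ν| * Real.log (2*π*n) := by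
      rw [abs_mul, abs_mul, abs_of_nonneg hln, abs_of_nonneg (by positivity : (0:ℝ) ≤ 2*π)]
    have e1 : 2*π * |μ| * Real.log (2*π*m) ≤ 2*π * |μ| * ((Real.log (2*π)+1) * Real.log T) :=
      mul_le_mul_of_nonneg_left hbm (by positivity)
    have e2 : 2*π * |ν| * Real.log (2*π*n) ≤ 2*π * |ν| * ((Real.log (2*π)+1) * Real.log T) :=
      mul_le_mul_of_nonneg_left hbn (by positivity)
    have e4 : 2*π * |μ| * ((Real.log (2*π)+1) * Real.log T)
        + 2*π * |ν| * ((Real.log (2*π)+1) * Real.log T) = (K-1) * Real.log T := by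
      rw [hKdef]; ring
    have e3 : (K - 1) * Real.log T ≤ Real.log T * Real.log T :=
      mul_le_mul_of_nonneg_right (by linarith) (by linarith)
    have e5 : Real.log T ^ 2 = Real.log T * Real.log T := pow_two _
    linarith
  -- the functions
  set v' : ℝ → ℂ := fun t => Complex.exp (Complex.I * t * l) with hv'def
  set v : ℝ → ℂ := fun t => v' t * (Complex.I * l)⁻¹ with hvdef
  set u : ℝ → ℂ := fun t => Complex.exp (Complex.I * c / ((Real.log t : ℝ) : ℂ)) with hudef
  set u' : ℝ → ℂ := fun t => u t * (-(Complex.I * c) / (t * ((Real.log t : ℝ) : ℂ) ^ 2))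
    with hu'def
  have hl' : (l : ℂ) ≠ 0 := by exact_mod_cast hl
  have hmemI : ∀ x ∈ Set.uIcc T' (2*T), T ≤ x := by
    intro x hx
    rw [Set.uIcc_of_le hT'2T] at hx
    linarith [hx.1]
  -- derivatives
  have hu : ∀ x ∈ Set.uIcc T' (2*T), HasDerivAt u (u' x) x := by
    intro x hx
    have hTx := hmemI x hx
    have hx1 : (1:ℝ) < x := by linarith
    have hx0 : x ≠ 0 := by linarith
    have hlx : Real.log x ≠ 0 := ne_of_gt (Real.log_pos hx1)
    have hlx' : ((Real.log x : ℝ) : ℂ) ≠ 0 := by exact_mod_cast hlx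
    have h1 : HasDerivAt (fun t : ℝ => ((Real.log t : ℝ) : ℂ)) ((x⁻¹ : ℝ) : ℂ) x :=
      (Real.hasDerivAt_log hx0).ofReal_comp
    have h2 := ((hasDerivAt_const x (Complex.I * (c:ℂ))).div h1 hlx').cexp
    rw [hudef, hu'def]
    convert h2 using 1
    have hx0' : (x:ℂ) ≠ 0 := by exact_mod_cast hx0
    field_simp
    · rfl
    · rw [hudef]
      simp only [Pi.div_apply, Complex.ofReal_inv]
      ring
  have hv : ∀ x ∈ Set.uIcc T' (2*T), HasDerivAt v (v' x) x := by
    intro x _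
    have h1 : HasDerivAt (fun t : ℝ => (t : ℂ)) 1 x := (hasDerivAt_id x).ofReal_comp
    have h2 := (((h1.const_mul Complex.I).mul_const (l : ℂ)).cexp).mul_const
      (Complex.I * l)⁻¹
    rw [hvdef, hv'def]
    convert h2 using 1
    · rfl
    · field_simp
  -- integrability
  have hsub0 : Set.uIcc T' (2*T) ⊆ {(0:ℝ)}ᶜ := by
    intro x hx
    have := hmemI x hx
    simp only [Set.mem_compl_iff, Set.mem_singleton_iff]
    intro h; rw [h] at this; linarith
  have hcontlog : ContinuousOn (fun t : ℝ => ((Real.log t : ℝ) : ℂ)) (Set.uIcc T' (2*T)) :=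
    Complex.continuous_ofReal.comp_continuousOn (Real.continuousOn_log.mono hsub0)
  have hlogne : ∀ x ∈ Set.uIcc T' (2*T), ((Real.log x : ℝ) : ℂ) ≠ 0 := by
    intro x hx
    have hTx := hmemI x hx
    have : Real.log x ≠ 0 := ne_of_gt (Real.log_pos (by linarith))
    exact_mod_cast this
  have hcontu : ContinuousOn u (Set.uIcc T' (2*T)) := by
    rw [hudef]
    exact Complex.continuous_exp.comp_continuousOn (continuousOn_const.div hcontlog hlogne)
  have hcontu' : ContinuousOn u' (Set.uIcc T' (2*T)) := by
    rw [hu'def]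
    apply hcontu.mul
    apply continuousOn_const.div
    · exact (Complex.continuous_ofReal.comp_continuousOn continuousOn_id).mul (hcontlog.pow 2)
    · intro x hx
      have hx0 : (x:ℂ) ≠ 0 := by
        have := hmemI x hx
        exact_mod_cast (by linarith : x ≠ 0)
      exact mul_ne_zero hx0 (pow_ne_zero 2 (hlogne x hx))
  have hu'int : IntervalIntegrable u' MeasureTheory.volume T' (2*T) :=
    hcontu'.intervalIntegrable
  have hv'cont : Continuous v' := by
    rw [hv'def]
    exact Complex.continuous_exp.comp
      (((continuous_const.mul Complex.continuous_ofReal).mul continuous_const))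
  have hv'int : IntervalIntegrable v' MeasureTheory.volume T' (2*T) :=
    hv'cont.intervalIntegrable _ _
  -- integration by parts
  have hibp := intervalIntegral.integral_mul_deriv_eq_deriv_mul hu hv hu'int hv'int
  -- identify the integrand
  have heq : (∫ t in T'..(2*T),
        Complex.exp (Complex.I * t * l) *
          Complex.exp ((2*π*Complex.I*μ * Real.log (2*π*m)) / (Real.log t : ℂ)) *
          Complex.exp (-(2*π*Complex.I*ν * Real.log (2*π*n)) / (Real.log t : ℂ)))
      = ∫ t in T'..(2*T), u t * v' t := by
    apply intervalIntegral.integral_congr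
    intro x hx
    have hlx' := hlogne x hx
    simp only [hudef, hv'def]
    rw [← Complex.exp_add, ← Complex.exp_add, ← Complex.exp_add]
    congr 1
    rw [hcdef]
    push_cast
    field_simp
    ring
  -- norms
  have hnormexp : ∀ z : ℂ, z.re = 0 → ‖Complex.exp z‖ = 1 := by
    intro z hz
    rw [Complex.norm_exp, hz, Real.exp_zero]
  have hnorm_u : ∀ x : ℝ, ‖u x‖ = 1 := by
    intro x
    rw [hudef]
    apply hnormexp
    simp [Complex.div_re]
  have hnorm_v' : ∀ x : ℝ, ‖v' x‖ = 1 := by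
    intro x
    rw [hv'def]
    apply hnormexp
    simp
  have hnorm_Il : ‖Complex.I * (l:ℂ)‖ = |l| := by
    simp [map_mul]
  have hnorm_v : ∀ x : ℝ, ‖v x‖ = |l|⁻¹ := by
    intro x
    rw [hvdef]
    simp only
    rw [norm_mul, hnorm_v', norm_inv, hnorm_Il, one_mul]
  -- bound the remainder integral
  have hrem : ‖∫ x in T'..(2*T), u' x * v x‖ ≤ |l|⁻¹ := by
    have hTT'pos : 0 < T' := by linarith
    have hlogT0 : 0 < Real.log T := by linarith
    have hC0 : ∀ x ∈ Set.uIoc T' (2*T), ‖u' x * v x‖ ≤ |c| / (T * Real.log T ^ 2) * |l|⁻¹ := by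
      intro x hx
      rw [Set.uIoc_of_le hT'2T] at hx
      have hTx : T ≤ x := by linarith [hx.1]
      have hx1 : (1:ℝ) < x := by linarith
      have hx0 : (0:ℝ) < x := by linarith
      have hlx : 0 < Real.log x := Real.log_pos hx1
      have hlogTx : Real.log T ≤ Real.log x := Real.log_le_log hT0 hTx
      rw [norm_mul, hnorm_v, hu'def]
      simp only
      rw [norm_mul, hnorm_u, one_mul]
      have hnum : ‖(-(Complex.I * (c:ℂ)) / ((x:ℂ) * ((Real.log x : ℝ):ℂ) ^ 2))‖
          = |c| / (x * Real.log x ^ 2) := by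
        rw [norm_div, norm_neg, norm_mul]
        simp [map_mul, map_pow,
          abs_of_pos hx0, abs_of_pos hlx]
      rw [hnum]
      apply mul_le_mul_of_nonneg_right _ (by positivity)
      apply div_le_div_of_nonneg_left (abs_nonneg c) (by positivity)
      have h1 : Real.log T ^ 2 ≤ Real.log x ^ 2 := by nlinarith
      nlinarith
    have := intervalIntegral.norm_integral_le_of_norm_le_const hC0
    have habs : |2*T - T'| ≤ T := by
      rw [abs_of_nonneg (by linarith)]; linarith
    have h2 : |c| / (T * Real.log T ^ 2) * |l|⁻¹ * |2*T - T'|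
        ≤ |c| / (T * Real.log T ^ 2) * |l|⁻¹ * T :=
      mul_le_mul_of_nonneg_left habs (by positivity)
    have h3 : |c| / (T * Real.log T ^ 2) * |l|⁻¹ * T = |c| / Real.log T ^ 2 * |l|⁻¹ := by
      field_simp
    have h4 : |c| / Real.log T ^ 2 * |l|⁻¹ ≤ 1 * |l|⁻¹ := by
      apply mul_le_mul_of_nonneg_right _ (by positivity)
      rw [div_le_one (by positivity)]
      exact hc
    calc ‖∫ x in T'..(2*T), u' x * v x‖
        ≤ |c| / (T * Real.log T ^ 2) * |l|⁻¹ * |2*T - T'| := this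
      _ ≤ |c| / Real.log T ^ 2 * |l|⁻¹ := by rw [← h3]; exact h2
      _ ≤ |l|⁻¹ := by linarith [h4]
  -- put it together
  rw [heq, hibp]
  have hb1 : ‖u (2*T) * v (2*T)‖ = |l|⁻¹ := by rw [norm_mul, hnorm_u, hnorm_v, one_mul]
  have hb2 : ‖u T' * v T'‖ = |l|⁻¹ := by rw [norm_mul, hnorm_u, hnorm_v, one_mul]
  calc ‖u (2*T) * v (2*T) - u T' * v T' - ∫ x in T'..(2*T), u' x * v x‖
      ≤ ‖u (2*T) * v (2*T) - u T' * v T'‖ + ‖∫ x in T'..(2*T), u' x * v x‖ :=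
        norm_sub_le _ _
    _ ≤ ‖u (2*T) * v (2*T)‖ + ‖u T' * v T'‖ + ‖∫ x in T'..(2*T), u' x * v x‖ := by
        linarith [norm_sub_le (u (2*T) * v (2*T)) (u T' * v T')]
    _ ≤ |l|⁻¹ + |l|⁻¹ + |l|⁻¹ := by rw [hb1, hb2]; linarith [hrem]
    _ ≤ 3 / |l| := by rw [div_eq_mul_inv]; linarith
end
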